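/- arXiv:math/9209218 — 8 statements merged into one kernel-verified Lean document; each statement's English description precedes it below -/
import Mathlib

section
/- Let m and l be strictly positive integers and 𝒜 a nonempty family of nonempty sets. Let 𝕋 be the family of nonempty subsets of 𝒜^m (sequences of length m from 𝒜). For 𝒯 ∈ 𝕋 write 𝒯* = { t↾j : t ∈ 𝒯, j ≤ m }. For 𝒯, 𝒯₀ ∈ 𝕋 say 𝒯 ⪯ 𝒯₀ if 𝒯 ⊆ 𝒯₀ and dp({ u : t⌢u ∈ 𝒯* }) ≥ dp({ u : t⌢u ∈ 𝒯₀* })/(2l) for every t ∈ 𝒯* \ 𝒯. Then for every 𝒯₀ ∈ 𝕋 and every cover ⟨𝒮_i⟩_{i<2l} of 𝒯₀ (i.e. 𝒯₀ ⊆ ⋃_{i<2l} 𝒮_i), there is a 𝒯 ⪯ 𝒯₀ such that 𝒯 ⊆ 𝒮_i for some i < 2l. -/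
/-- For a family `𝒜` of sets (not containing `∅`), `dp 𝒜` is the least cardinality of a finite
set `I` meeting every member of `𝒜`; in particular `dp ∅ = 0`. -/
noncomputable def dp {β : Type*} (𝒜 : Set (Set β)) : ℕ :=
  sInf {m | ∃ I : Finset β, I.card = m ∧ ∀ A ∈ 𝒜, ∃ a ∈ I, a ∈ A}

/-- For a set `𝒯` of sequences (of members of `𝒜`) of length `m`,
`starSet m 𝒯 = 𝒯* = { t↾j : t ∈ 𝒯, j ≤ m }`, the set of initial segments of members of `𝒯`. -/
def starSet {β : Type*} (m : ℕ) (𝒯 : Set (List (Set β))) : Set (List (Set β)) :=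
  {s | ∃ t ∈ 𝒯, ∃ j ≤ m, s = t.take j}

/-- `𝒯 ⪯ 𝒯₀` iff `𝒯 ⊆ 𝒯₀` and
`dp { u : t⌢u ∈ 𝒯* } ≥ dp { u : t⌢u ∈ 𝒯₀* } / (2l)` for every `t ∈ 𝒯* \ 𝒯`. -/
def prec {β : Type*} (l m : ℕ) (𝒯 𝒯₀ : Set (List (Set β))) : Prop :=
  𝒯 ⊆ 𝒯₀ ∧ ∀ t ∈ starSet m 𝒯 \ 𝒯,
    (dp {u | t ++ [u] ∈ starSet m 𝒯₀} : ℝ) / (2 * l) ≤ (dp {u | t ++ [u] ∈ starSet m 𝒯} : ℝ)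

lemma dp_empty' {β : Type*} : dp (∅ : Set (Set β)) = 0 := by
  have : 0 ∈ {m | ∃ I : Finset β, I.card = m ∧ ∀ A ∈ (∅ : Set (Set β)), ∃ a ∈ I, a ∈ A} :=
    ⟨∅, rfl, by simp⟩
  exact Nat.eq_zero_of_le_zero (Nat.sInf_le this)

lemma dp_key {β : Type*} (k : ℕ) (hk : 0 < k) (B : Set (Set β))
    (hB : B.Nonempty) (Bs : Fin k → Set (Set β)) (hsub : ∀ i, Bs i ⊆ B)
    (hU : ∀ A ∈ B, ∃ i, A ∈ Bs i) :
    ∃ i, (Bs i).Nonempty ∧ (dp B : ℝ) ≤ k * dp (Bs i) := by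
  classical
  by_cases h0 : dp B = 0
  · obtain ⟨A, hA⟩ := hB
    obtain ⟨i, hi⟩ := hU A hA
    exact ⟨i, ⟨A, hi⟩, by rw [h0]; push_cast; positivity⟩
  · have hSB : ({n | ∃ I : Finset β, I.card = n ∧ ∀ A ∈ B, ∃ a ∈ I, a ∈ A}).Nonempty := by
      by_contra h
      exact h0 (by rw [dp, Set.not_nonempty_iff_eq_empty.mp h, Nat.sInf_empty])
    obtain ⟨I, hIcard, hItr⟩ : ∃ I : Finset β, I.card = dp B ∧ ∀ A ∈ B, ∃ a ∈ I, a ∈ A :=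
      Nat.sInf_mem hSB
    have hSi : ∀ i, ∃ J : Finset β, J.card = dp (Bs i) ∧ ∀ A ∈ Bs i, ∃ a ∈ J, a ∈ A := by
      intro i
      have hne : ({n | ∃ J : Finset β, J.card = n ∧ ∀ A ∈ Bs i, ∃ a ∈ J, a ∈ A}).Nonempty :=
        ⟨I.card, I, rfl, fun A hA => hItr A (hsub i hA)⟩
      show dp (Bs i) ∈ {n | ∃ J : Finset β, J.card = n ∧ ∀ A ∈ Bs i, ∃ a ∈ J, a ∈ A}
      exact Nat.sInf_mem hne
    choose J hJcard hJtr using hSi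
    have hsum : dp B ≤ ∑ i, dp (Bs i) := by
      calc dp B ≤ (Finset.univ.biUnion J).card := by
            apply Nat.sInf_le
            refine ⟨Finset.univ.biUnion J, rfl, fun A hA => ?_⟩
            obtain ⟨i, hi⟩ := hU A hA
            obtain ⟨a, haJ, haA⟩ := hJtr i A hi
            exact ⟨a, Finset.mem_biUnion.mpr ⟨i, Finset.mem_univ i, haJ⟩, haA⟩
        _ ≤ ∑ i, (J i).card := Finset.card_biUnion_le
        _ = ∑ i, dp (Bs i) := by simp [hJcard]
    haveI : Nonempty (Fin k) := Fin.pos_iff_nonempty.mp hk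
    obtain ⟨i, -, hieq⟩ := Finset.exists_mem_eq_sup Finset.univ Finset.univ_nonempty
      (fun i => dp (Bs i))
    have hle : dp B ≤ k * dp (Bs i) := by
      calc dp B ≤ ∑ j, dp (Bs j) := hsum
        _ ≤ Finset.univ.card * dp (Bs i) := by
            rw [← hieq]
            exact Finset.sum_le_card_nsmul _ _ _ (fun j _ => Finset.le_sup (f := fun i => dp (Bs i)) (Finset.mem_univ j))
        _ = k * dp (Bs i) := by simp
    refine ⟨i, ?_, by exact_mod_cast hle⟩
    rcases Set.eq_empty_or_nonempty (Bs i) with he | hne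
    · exfalso
      rw [he, dp_empty', Nat.mul_zero] at hle
      exact h0 (Nat.eq_zero_of_le_zero hle)
    · exact hne

lemma mem_starSet_nil {β : Type*} {m : ℕ} {𝒯 : Set (List (Set β))} :
    [] ∈ starSet m 𝒯 ↔ 𝒯.Nonempty := by
  constructor
  · rintro ⟨t, ht, -⟩; exact ⟨t, ht⟩
  · rintro ⟨t, ht⟩; exact ⟨t, ht, 0, Nat.zero_le _, rfl⟩

lemma starSet_cons {β : Type*} {m : ℕ} {𝒯 : Set (List (Set β))}
    (hlen : ∀ t ∈ 𝒯, t.length = m + 1) (A : Set β) (s : List (Set β)) :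
    A :: s ∈ starSet (m + 1) 𝒯 ↔ s ∈ starSet m {t' | A :: t' ∈ 𝒯} := by
  constructor
  · rintro ⟨t, ht, j, hj, heq⟩
    match j, t with
    | 0, t => simp at heq
    | j + 1, [] => exact absurd (hlen [] ht) (by simp)
    | j + 1, u :: t'' =>
      simp only [List.take_succ_cons, List.cons.injEq] at heq
      obtain ⟨rfl, rfl⟩ := heq
      exact ⟨t'', ht, j, by omega, rfl⟩
  · rintro ⟨t', ht', j, hj, rfl⟩
    exact ⟨A :: t', ht', j + 1, by omega, by simp⟩

lemma aux_lemma {β : Type*} (l : ℕ) (hl : 1 ≤ l) :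
    ∀ m (𝒯₀ : Set (List (Set β))), 𝒯₀.Nonempty → (∀ t ∈ 𝒯₀, t.length = m) →
    ∀ 𝒮 : Fin (2 * l) → Set (List (Set β)), 𝒯₀ ⊆ ⋃ i, 𝒮 i →
    ∃ 𝒯 : Set (List (Set β)), 𝒯.Nonempty ∧ prec l m 𝒯 𝒯₀ ∧ ∃ i, 𝒯 ⊆ 𝒮 i := by
  intro m
  induction m with
  | zero =>
    intro 𝒯₀ h𝒯₀ hlen 𝒮 hcov
    obtain ⟨t, ht⟩ := h𝒯₀
    have ht0 : t = [] := List.length_eq_zero_iff.mp (hlen t ht)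
    subst ht0
    obtain ⟨i, hi⟩ := Set.mem_iUnion.mp (hcov ht)
    refine ⟨{[]}, ⟨[], rfl⟩, ⟨fun s hs => by rw [Set.mem_singleton_iff.mp hs]; exact ht, ?_⟩,
      i, fun s hs => by rw [Set.mem_singleton_iff.mp hs]; exact hi⟩
    rintro s ⟨⟨t₀, ht₀, j, hj, rfl⟩, hs2⟩
    exact absurd (by rw [Set.mem_singleton_iff.mp ht₀]; simp) hs2
  | succ m ih =>
    intro 𝒯₀ h𝒯₀ hlen 𝒮 hcov
    set B : Set (Set β) := {A | ∃ t', A :: t' ∈ 𝒯₀} with hBdef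
    have key : ∀ A : Set β, ∃ (𝒯A : Set (List (Set β))) (i : Fin (2 * l)),
        A ∈ B → 𝒯A.Nonempty ∧ prec l m 𝒯A {t' | A :: t' ∈ 𝒯₀} ∧
          𝒯A ⊆ {t' | A :: t' ∈ 𝒮 i} := by
      intro A
      by_cases hA : A ∈ B
      · obtain ⟨t', ht'⟩ := hA
        obtain ⟨𝒯A, h1, h2, i, h3⟩ := ih {t' | A :: t' ∈ 𝒯₀} ⟨t', ht'⟩
          (fun s hs => by have := hlen _ hs; simpa using this)
          (fun i => {t' | A :: t' ∈ 𝒮 i})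
          (fun s hs => by
            obtain ⟨i, hi⟩ := Set.mem_iUnion.mp (hcov hs)
            exact Set.mem_iUnion.mpr ⟨i, hi⟩)
        exact ⟨𝒯A, i, fun _ => ⟨h1, h2, h3⟩⟩
      · exact ⟨∅, ⟨0, by omega⟩, fun h => absurd h hA⟩
    choose F I hkey using key
    have hBne : B.Nonempty := by
      obtain ⟨t, ht⟩ := h𝒯₀
      match t with
      | [] => exact absurd (hlen [] ht) (by simp)
      | A :: t' => exact ⟨A, t', ht⟩
    obtain ⟨i, hBsne, hdp⟩ := dp_key (2 * l) (by omega) B hBne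
      (fun i => {A | A ∈ B ∧ I A = i}) (fun i A hA => hA.1)
      (fun A hA => ⟨I A, hA, rfl⟩)
    set Bi : Set (Set β) := {A | A ∈ B ∧ I A = i} with hBidef
    set 𝒯 : Set (List (Set β)) := {s | ∃ A ∈ Bi, ∃ t' ∈ F A, s = A :: t'} with h𝒯def
    have hmem𝒯 : ∀ (A : Set β) (t' : List (Set β)), A :: t' ∈ 𝒯 ↔ A ∈ Bi ∧ t' ∈ F A := by
    
      intro A t'
      constructor
      · rintro ⟨A', hA', s, hs, heq⟩
        obtain ⟨rfl, rfl⟩ := List.cons_eq_cons.mp heq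
        exact ⟨hA', hs⟩
      · rintro ⟨hA, ht'⟩; exact ⟨A, hA, t', ht', rfl⟩
    have hlen𝒯 : ∀ t ∈ 𝒯, t.length = m + 1 := by
      rintro t ⟨A, hA, t', ht', rfl⟩
      have h1 : A :: t' ∈ 𝒯₀ := ((hkey A hA.1).2.1).1 ht'
      exact hlen _ h1
    have hsec : ∀ A ∈ Bi, {t' | A :: t' ∈ 𝒯} = F A := by
      intro A hA
      ext t'
      simp only [Set.mem_setOf_eq, hmem𝒯, hA, true_and]
    have hsec' : ∀ A ∉ Bi, {t' | A :: t' ∈ 𝒯} = ∅ := by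
      intro A hA
      ext t'
      simp only [Set.mem_setOf_eq, hmem𝒯, Set.mem_empty_iff_false, iff_false]
      exact fun h => hA h.1
    have h2lpos : (0 : ℝ) < 2 * (l : ℝ) := by
      have : (0 : ℕ) < 2 * l := by omega
      exact_mod_cast this
    refine ⟨𝒯, ?_, ⟨?_, ?_⟩, i, ?_⟩
    · obtain ⟨A, hA⟩ := hBsne
      obtain ⟨t', ht'⟩ := (hkey A hA.1).1
      exact ⟨A :: t', (hmem𝒯 A t').mpr ⟨hA, ht'⟩⟩
    · rintro s ⟨A, hA, t', ht', rfl⟩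
      exact ((hkey A hA.1).2.1).1 ht'
    · rintro t ⟨htstar, htnot⟩
      rcases t with _ | ⟨A, s⟩
      · have e1 : {u | ([] : List (Set β)) ++ [u] ∈ starSet (m + 1) 𝒯₀} = B := by
          ext u
          simp only [List.nil_append, Set.mem_setOf_eq]
          rw [show ([u] : List (Set β)) = u :: [] from rfl, starSet_cons hlen u [],
            mem_starSet_nil]
          exact ⟨fun ⟨t', ht'⟩ => ⟨t', ht'⟩, fun ⟨t', ht'⟩ => ⟨t', ht'⟩⟩
        have e2 : {u | ([] : List (Set β)) ++ [u] ∈ starSet (m + 1) 𝒯} = Bi := by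
          ext u
          simp only [List.nil_append, Set.mem_setOf_eq]
          rw [show ([u] : List (Set β)) = u :: [] from rfl, starSet_cons hlen𝒯 u [],
            mem_starSet_nil]
          constructor
          · rintro ⟨t', ht'⟩
            exact ((hmem𝒯 u t').mp ht').1
          · intro hu
            obtain ⟨t', ht'⟩ := (hkey u hu.1).1
            exact ⟨t', (hmem𝒯 u t').mpr ⟨hu, ht'⟩⟩
        rw [e1, e2, div_le_iff₀ h2lpos]
        push_cast at hdp
        linarith
      · have hAs : s ∈ starSet m {t' | A :: t' ∈ 𝒯} := (starSet_cons hlen𝒯 A s).mp htstar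
        have hABi : A ∈ Bi := by
          by_contra h
          rw [hsec' A h] at hAs
          obtain ⟨t', ht', -⟩ := hAs
          exact ht'
        rw [hsec A hABi] at hAs
        have hsnot : s ∉ F A := fun h => htnot ((hmem𝒯 A s).mpr ⟨hABi, h⟩)
        have hp := ((hkey A hABi.1).2.1).2 s ⟨hAs, hsnot⟩
        have e1 : {u | (A :: s) ++ [u] ∈ starSet (m + 1) 𝒯₀} =
            {u | s ++ [u] ∈ starSet m {t' | A :: t' ∈ 𝒯₀}} := by
          ext u
          simp only [Set.mem_setOf_eq, List.cons_append]
          exact starSet_cons hlen A (s ++ [u])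
        have e2 : {u | (A :: s) ++ [u] ∈ starSet (m + 1) 𝒯} =
            {u | s ++ [u] ∈ starSet m (F A)} := by
          ext u
          simp only [Set.mem_setOf_eq, List.cons_append]
          rw [starSet_cons hlen𝒯 A (s ++ [u]), hsec A hABi]
        rw [e1, e2]
        exact hp
    · rintro s ⟨A, hA, t', ht', rfl⟩
      have h3 := (hkey A hA.1).2.2 ht'
      exact hA.2 ▸ h3

/-- **Lemma 1C.** Let `m, l ≥ 1` and `𝒜` a nonempty family of nonempty sets.  Let `𝕋` be the
family of nonempty sets of sequences of length `m` from `𝒜`.  Fix `𝒯₀ ∈ 𝕋` and a cover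
`⟨𝒮_i⟩_{i<2l}` of `𝒯₀`.  Then there is a `𝒯 ⪯ 𝒯₀` (in particular `𝒯 ∈ 𝕋`) with `𝒯 ⊆ 𝒮_i`
for some `i < 2l`. -/
theorem stmt_2 {β : Type*} (m l : ℕ) (hm : 1 ≤ m) (hl : 1 ≤ l)
    (𝒜 : Set (Set β)) (h𝒜 : 𝒜.Nonempty) (h𝒜ne : ∀ A ∈ 𝒜, A.Nonempty)
    (𝒯₀ : Set (List (Set β))) (h𝒯₀ : 𝒯₀.Nonempty)
    (h𝒯₀m : ∀ t ∈ 𝒯₀, t.length = m ∧ ∀ u ∈ t, u ∈ 𝒜)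
    (𝒮 : Fin (2 * l) → Set (List (Set β))) (hcover : 𝒯₀ ⊆ ⋃ i, 𝒮 i) :
    ∃ 𝒯 : Set (List (Set β)), 𝒯.Nonempty ∧ prec l m 𝒯 𝒯₀ ∧ ∃ i : Fin (2 * l), 𝒯 ⊆ 𝒮 i :=
  aux_lemma l hl m 𝒯₀ h𝒯₀ (fun t ht => (h𝒯₀m t ht).1) 𝒮 hcover
end

section
/- Let n, l, k be natural numbers with n, l ≥ 2, and let W ⊆ n × n be a set such that whenever I ⊆ n with #(I) = l and J_0,…,J_{l−1} ⊆ n are pairwise disjoint sets each of cardinality at most k, there are i ∈ I and j < l with {i} × J_j ⊆ W. Take r ≤ k, set Z = n^r, and let W̃ = { (i,z) : i < n, z ∈ Z, (i, z(j)) ∈ W for every j < r }. Let m ≥ 1, 𝒜 a nonempty family of nonempty sets, 𝕋 the family of nonempty subsets of 𝒜^m with the relation ⪯ (defined using the parameter l), 𝒯₀ ∈ 𝕋, and H : 𝒯₀ → n any function. Then either there are i < n and 𝒯 ⪯ 𝒯₀ such that H(t) = i for every t ∈ 𝒯, or there is a set J ⊆ n with #(J) ≤ r·l such that for every z ∈ (n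 \ J)^r there is a 𝒯 ⪯ 𝒯₀ with (H(t), z) ∈ W̃ for every t ∈ 𝒯. -/
namespace Stmt3Aux

variable {β : Type*}

lemma dp_union_le (A B : Set (Set β)) : dp (A ∪ B) ≤ dp A + dp B := by
  classical
  by_cases hA : {c | ∃ I : Finset β, I.card = c ∧ ∀ X ∈ A, ∃ a ∈ I, a ∈ X}.Nonempty
  · by_cases hB : {c | ∃ I : Finset β, I.card = c ∧ ∀ X ∈ B, ∃ a ∈ I, a ∈ X}.Nonempty
    · obtain ⟨IA, hIA, hhA⟩ := Nat.sInf_mem hA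
      obtain ⟨IB, hIB, hhB⟩ := Nat.sInf_mem hB
      have hmem : (IA ∪ IB).card ∈
          {c | ∃ I : Finset β, I.card = c ∧ ∀ X ∈ A ∪ B, ∃ a ∈ I, a ∈ X} := by
        refine ⟨IA ∪ IB, rfl, ?_⟩
        rintro X (hX | hX)
        · obtain ⟨a, ha, hax⟩ := hhA X hX
          exact ⟨a, Finset.mem_union_left _ ha, hax⟩
        · obtain ⟨a, ha, hax⟩ := hhB X hX
          exact ⟨a, Finset.mem_union_right _ ha, hax⟩
      have h1 : dp (A ∪ B) ≤ (IA ∪ IB).card := Nat.sInf_le hmem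
      have h2 : (IA ∪ IB).card ≤ IA.card + IB.card := Finset.card_union_le _ _
      have : dp A = IA.card := hIA.symm
      have : dp B = IB.card := hIB.symm
      omega
    · have he : {c | ∃ I : Finset β, I.card = c ∧ ∀ X ∈ A ∪ B, ∃ a ∈ I, a ∈ X} = ∅ := by
        ext c
        simp only [Set.mem_setOf_eq, Set.mem_empty_iff_false, iff_false]
        rintro ⟨I, hcard, hhit⟩
        exact hB ⟨I.card, I, rfl, fun X hX => hhit X (Or.inr hX)⟩
      have h0 : dp (A ∪ B) = 0 := by
        unfold dp; rw [he]; exact Nat.sInf_empty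
      omega
  · have he : {c | ∃ I : Finset β, I.card = c ∧ ∀ X ∈ A ∪ B, ∃ a ∈ I, a ∈ X} = ∅ := by
      ext c
      simp only [Set.mem_setOf_eq, Set.mem_empty_iff_false, iff_false]
      rintro ⟨I, hcard, hhit⟩
      exact hA ⟨I.card, I, rfl, fun X hX => hhit X (Or.inl hX)⟩
    have h0 : dp (A ∪ B) = 0 := by
      unfold dp; rw [he]; exact Nat.sInf_empty
    omega

def sub (u : Set β) (𝒯 : Set (List (Set β))) : Set (List (Set β)) := {t | u :: t ∈ 𝒯}

lemma nil_mem_starSet {m : ℕ} {𝒯 : Set (List (Set β))} (h : 𝒯.Nonempty) :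
    ([] : List (Set β)) ∈ starSet m 𝒯 :=
  ⟨h.choose, h.choose_spec, 0, Nat.zero_le _, by simp⟩

lemma starSet_nonempty_of_mem {m : ℕ} {𝒯 : Set (List (Set β))} {s : List (Set β)}
    (h : s ∈ starSet m 𝒯) : 𝒯.Nonempty := by
  obtain ⟨t, ht, _⟩ := h
  exact ⟨t, ht⟩

lemma mem_starSet_cons {m : ℕ} {𝒯 : Set (List (Set β))} {u : Set β} {s : List (Set β)} :
    (u :: s) ∈ starSet (m + 1) 𝒯 ↔ s ∈ starSet m (sub u 𝒯) := by
  constructor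
  · rintro ⟨t, ht, j, hj, heq⟩
    cases t with
    | nil => simp at heq
    | cons a t' =>
      cases j with
      | zero => simp at heq
      | succ j' =>
        rw [List.take_succ_cons] at heq
        injection heq with h1 h2
        subst h1
        exact ⟨t', ht, j', by omega, h2⟩
  · rintro ⟨t, ht, j, hj, rfl⟩
    exact ⟨u :: t, ht, j + 1, by omega, (List.take_succ_cons ..).symm⟩

def ext (m : ℕ) (𝒯 : Set (List (Set β))) (s : List (Set β)) : Set (Set β) :=
  {u | s ++ [u] ∈ starSet m 𝒯}

lemma ext_cons (m : ℕ) (𝒯 : Set (List (Set β))) (u : Set β) (s : List (Set β)) :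
    ext (m + 1) 𝒯 (u :: s) = ext m (sub u 𝒯) s := by
  ext v
  simp only [ext, Set.mem_setOf_eq, List.cons_append]
  exact mem_starSet_cons

lemma ext_nil (m : ℕ) (𝒯 : Set (List (Set β))) :
    ext m 𝒯 [] = {u | [u] ∈ starSet m 𝒯} := by
  ext v; simp [ext]

lemma mem_root_iff {m : ℕ} {𝒯 : Set (List (Set β))} {u : Set β} :
    [u] ∈ starSet (m + 1) 𝒯 ↔ (sub u 𝒯).Nonempty := by
  rw [show ([u] : List (Set β)) = u :: [] from rfl, mem_starSet_cons]
  constructor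
  · exact starSet_nonempty_of_mem
  · exact nil_mem_starSet

def Good (m : ℕ) (w : List (Set β) → ℝ) (γ : ℝ) (𝒯 : Set (List (Set β))) : Prop :=
  𝒯.Nonempty ∧ (∀ t ∈ 𝒯, t.length = m) ∧
    ∀ s ∈ starSet m 𝒯 \ 𝒯, γ * w s ≤ (dp (ext m 𝒯 s) : ℝ)

lemma good_anti {m : ℕ} {w : List (Set β) → ℝ} (hw : ∀ s, 0 ≤ w s) {γ γ' : ℝ}
    (h : γ' ≤ γ) {𝒯 : Set (List (Set β))} (hG : Good m w γ 𝒯) : Good m w γ' 𝒯 :=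
  ⟨hG.1, hG.2.1, fun s hs =>
    le_trans (mul_le_mul_of_nonneg_right h (hw s)) (hG.2.2 s hs)⟩

lemma assemble {m : ℕ} {w : List (Set β) → ℝ} {θ : ℝ} (X : Set (Set β))
    (P : Set β → Set (List (Set β))) (𝒮' : Set (List (Set β)))
    (hXne : X.Nonempty) (hXdp : θ * w [] ≤ (dp X : ℝ))
    (hXP : ∀ u ∈ X, P u ⊆ sub u 𝒮' ∧ Good m (fun s => w (u :: s)) θ (P u)) :
    ∃ 𝒯', 𝒯' ⊆ 𝒮' ∧ Good (m + 1) w θ 𝒯' := by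
  classical
  refine ⟨{s | ∃ u ∈ X, ∃ t ∈ P u, s = u :: t}, ?_, ?_, ?_, ?_⟩
  · rintro s ⟨u, hu, t, ht, rfl⟩
    exact (hXP u hu).1 ht
  · obtain ⟨u0, hu0⟩ := hXne
    obtain ⟨t0, ht0⟩ := ((hXP u0 hu0).2).1
    exact ⟨u0 :: t0, u0, hu0, t0, ht0, rfl⟩
  · rintro s ⟨u, hu, t, ht, rfl⟩
    have ht' := ((hXP u hu).2).2.1 t ht
    simp [ht']
  · have hsub' : ∀ u ∈ X, sub u {s | ∃ u ∈ X, ∃ t ∈ P u, s = u :: t} = P u := by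
      intro u hu
      ext t
      simp only [sub, Set.mem_setOf_eq]
      constructor
      · rintro ⟨u', hu', t', ht', heq⟩
        injection heq with e1 e2
        subst e1; subst e2; exact ht'
      · intro ht; exact ⟨u, hu, t, ht, rfl⟩
    have hextnil : ext (m + 1) {s | ∃ u ∈ X, ∃ t ∈ P u, s = u :: t} [] = X := by
      rw [ext_nil]
      ext u
      simp only [Set.mem_setOf_eq]
      rw [mem_root_iff]
      constructor
      · rintro ⟨t, ht⟩
        obtain ⟨u', hu', t', ht', heq⟩ := ht
        injection heq with e1 e2
        subst e1; exact hu'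
      · intro hu
        obtain ⟨t0, ht0⟩ := ((hXP u hu).2).1
        refine ⟨t0, ?_⟩
        exact ⟨u, hu, t0, ht0, rfl⟩
    rintro s ⟨hs1, hs2⟩
    cases s with
    | nil =>
      rw [hextnil]; exact hXdp
    | cons u s' =>
      have hs1' := mem_starSet_cons.mp hs1
      have husub : (sub u {s | ∃ u ∈ X, ∃ t ∈ P u, s = u :: t}).Nonempty :=
        starSet_nonempty_of_mem hs1'
      have huX : u ∈ X := by
        obtain ⟨t, ht⟩ := husub
        obtain ⟨u', hu', t', ht', heq⟩ := ht
        injection heq with e1 e2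
        subst e1; exact hu'
      rw [ext_cons, hsub' u huX]
      have hs1'' : s' ∈ starSet m (P u) := by rwa [hsub' u huX] at hs1'
      have hs2' : s' ∉ P u := fun h => hs2 ⟨u, huX, s', h, rfl⟩
      exact ((hXP u huX).2).2.2 s' ⟨hs1'', hs2'⟩

lemma lemA : ∀ (m : ℕ) (w : List (Set β) → ℝ), (∀ s, 0 ≤ w s) → ∀ (γ δ : ℝ), 0 ≤ δ → δ ≤ γ →
    ∀ (𝒯 𝒮 : Set (List (Set β))), Good m w γ 𝒯 →
    (∃ 𝒯', 𝒯' ⊆ 𝒯 ∩ 𝒮 ∧ Good m w δ 𝒯') ∨ (∃ 𝒯', 𝒯' ⊆ 𝒯 \ 𝒮 ∧ Good m w (γ - δ) 𝒯') := by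
  intro m
  induction m with
  | zero =>
    intro w hw γ δ hδ0 hδγ 𝒯 𝒮 hG
    obtain ⟨⟨t0, ht0⟩, hlen, _⟩ := hG
    have ht0nil : t0 = [] := List.length_eq_zero_iff.mp (hlen _ ht0)
    subst ht0nil
    have hGood : ∀ θ : ℝ, Good 0 w θ {([] : List (Set β))} := by
      intro θ
      refine ⟨⟨[], rfl⟩, by simp, ?_⟩
      rintro s ⟨hs1, hs2⟩
      exfalso
      obtain ⟨t, ht, j, hj, rfl⟩ := hs1
      interval_cases j
      simp_all
    by_cases hS : ([] : List (Set β)) ∈ 𝒮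
    · exact Or.inl ⟨{[]}, Set.singleton_subset_iff.mpr ⟨ht0, hS⟩, hGood δ⟩
    · exact Or.inr ⟨{[]}, Set.singleton_subset_iff.mpr ⟨ht0, hS⟩, hGood _⟩
  | succ m ih =>
    intro w hw γ δ hδ0 hδγ 𝒯 𝒮 hG
    classical
    obtain ⟨hne, hlen, hnode⟩ := hG
    have hnilnot : ([] : List (Set β)) ∉ 𝒯 := fun h => by simpa using hlen _ h
    set R : Set (Set β) := {u | [u] ∈ starSet (m + 1) 𝒯} with hR
    have hsubGood : ∀ u ∈ R, Good m (fun s => w (u :: s)) γ (sub u 𝒯) := by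
      intro u hu
      refine ⟨mem_root_iff.mp hu, ?_, ?_⟩
      · intro t ht
        have := hlen _ ht
        simpa using this
      · intro s hs
        have h1 : (u :: s) ∈ starSet (m + 1) 𝒯 \ 𝒯 := ⟨mem_starSet_cons.mpr hs.1, hs.2⟩
        have := hnode _ h1
        rwa [ext_cons] at this
    have key : ∀ u : Set β, ∃ P : Set (List (Set β)), u ∈ R →
        ((P ⊆ sub u 𝒯 ∩ sub u 𝒮 ∧ Good m (fun s => w (u :: s)) δ P) ∨
         (P ⊆ sub u 𝒯 \ sub u 𝒮 ∧ Good m (fun s => w (u :: s)) (γ - δ) P)) := by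
      intro u
      by_cases hu : u ∈ R
      · obtain h | h := ih (fun s => w (u :: s)) (fun s => hw _) γ δ hδ0 hδγ
          (sub u 𝒯) (sub u 𝒮) (hsubGood u hu)
        · exact ⟨h.choose, fun _ => Or.inl h.choose_spec⟩
        · exact ⟨h.choose, fun _ => Or.inr h.choose_spec⟩
      · exact ⟨∅, fun h => absurd h hu⟩
    choose P hP using key
    set RA : Set (Set β) := {u | u ∈ R ∧ P u ⊆ sub u 𝒯 ∩ sub u 𝒮 ∧
      Good m (fun s => w (u :: s)) δ (P u)} with hRA
    have hRB : ∀ u ∈ R, u ∉ RA →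
        (P u ⊆ sub u 𝒯 \ sub u 𝒮 ∧ Good m (fun s => w (u :: s)) (γ - δ) (P u)) := by
      intro u hu hua
      rcases hP u hu with h | h
      · exact absurd ⟨hu, h.1, h.2⟩ hua
      · exact h
    have hRsub : RA ⊆ R := fun u hu => hu.1
    have hroot : γ * w [] ≤ (dp R : ℝ) := by
      have := hnode [] ⟨nil_mem_starSet hne, hnilnot⟩
      rwa [ext_nil] at this
    have hsplit : (dp R : ℝ) ≤ (dp RA : ℝ) + (dp (R \ RA) : ℝ) := by
      have h1 : R = RA ∪ (R \ RA) := (Set.union_diff_cancel hRsub).symm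
      have h2 := dp_union_le RA (R \ RA)
      rw [← h1] at h2
      exact_mod_cast h2
    by_cases hRAne : RA.Nonempty
    · by_cases hdpA : δ * w [] ≤ (dp RA : ℝ)
      · left
        refine assemble RA P (𝒯 ∩ 𝒮) hRAne hdpA ?_
        intro u hu
        refine ⟨fun x hx => ⟨(hu.2.1 hx).1, (hu.2.1 hx).2⟩, hu.2.2⟩
      · right
        have hRBne : (R \ RA).Nonempty := by
          by_contra h
          rw [Set.not_nonempty_iff_eq_empty] at h
          have heq : R = RA := by
            rw [← Set.union_diff_cancel hRsub, h, Set.union_empty]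
          rw [← heq] at hdpA
          exact hdpA (le_trans (mul_le_mul_of_nonneg_right hδγ (hw [])) hroot)
        have hdpB : (γ - δ) * w [] ≤ (dp (R \ RA) : ℝ) := by
          push_neg at hdpA
          have hexp : (γ - δ) * w [] = γ * w [] - δ * w [] := by ring
          rw [hexp]
          linarith
        refine assemble (R \ RA) P (𝒯 \ 𝒮) hRBne hdpB ?_
        intro u hu
        obtain ⟨h1, h2⟩ := hRB u hu.1 hu.2
        exact ⟨fun x hx => ⟨(h1 hx).1, (h1 hx).2⟩, h2⟩
    · right
      have hRne : R.Nonempty := by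
        obtain ⟨t, ht⟩ := hne
        cases t with
        | nil => exact absurd ht hnilnot
        | cons u t' => exact ⟨u, mem_root_iff.mpr ⟨t', ht⟩⟩
      rw [Set.not_nonempty_iff_eq_empty] at hRAne
      have hRB' : R \ RA = R := by rw [hRAne, Set.diff_empty]
      have hdpB : (γ - δ) * w [] ≤ (dp (R \ RA) : ℝ) := by
        rw [hRB']
        refine le_trans ?_ hroot
        exact mul_le_mul_of_nonneg_right (by linarith) (hw [])
      refine assemble (R \ RA) P (𝒯 \ 𝒮) (by rw [hRB']; exact hRne) hdpB ?_
      intro u hu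
      obtain ⟨h1, h2⟩ := hRB u hu.1 hu.2
      exact ⟨fun x hx => ⟨(h1 hx).1, (h1 hx).2⟩, h2⟩

end Stmt3Aux

open Stmt3Aux

/-- **Corollary 1D.** Let `n, l, k` with `n, l ≥ 2` and `W ⊆ n × n` be such that whenever
`I ∈ [n]^l` and `J_0, …, J_{l-1} ∈ [n]^{≤k}` are disjoint there are `i ∈ I`, `j < l` with
`{i} × J_j ⊆ W`.  Take `r ≤ k`, `Z = n^r` and
`W̃ = {(i,z) : i < n, z ∈ Z, (i, z(j)) ∈ W ∀ j < r}`.  Let `m ≥ 1`, `𝒜` a nonempty family of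
nonempty sets, `𝒯₀` a nonempty set of sequences of length `m` from `𝒜`, and `H : 𝒯₀ → n` any
function.  Then either there are `i < n`, `𝒯 ⪯ 𝒯₀` with `H(t) = i` for all `t ∈ 𝒯`, or there is
`J ∈ [n]^{≤ rl}` such that for every `z ∈ (n \ J)^r` there is `𝒯 ⪯ 𝒯₀` with
`(H(t), z) ∈ W̃` for every `t ∈ 𝒯`. -/
theorem stmt_3 {β : Type*} (n l k r m : ℕ) (hn : 2 ≤ n) (hl : 2 ≤ l) (hr : r ≤ k) (hm : 1 ≤ m)
    (W : Set (Fin n × Fin n))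
    (hW : ∀ I : Finset (Fin n), I.card = l →
      ∀ J : Fin l → Finset (Fin n),
        (∀ j, (J j).card ≤ k) → (∀ j j', j ≠ j' → Disjoint (J j) (J j')) →
        ∃ i ∈ I, ∃ j : Fin l, ∀ a ∈ J j, ((i : Fin n), a) ∈ W)
    (𝒜 : Set (Set β)) (h𝒜 : 𝒜.Nonempty) (h𝒜ne : ∀ A ∈ 𝒜, A.Nonempty)
    (𝒯₀ : Set (List (Set β))) (h𝒯₀ : 𝒯₀.Nonempty)
    (h𝒯₀m : ∀ t ∈ 𝒯₀, t.length = m ∧ ∀ u ∈ t, u ∈ 𝒜)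
    (H : List (Set β) → Fin n) :
    (∃ i : Fin n, ∃ 𝒯 : Set (List (Set β)), 𝒯.Nonempty ∧ prec l m 𝒯 𝒯₀ ∧
        ∀ t ∈ 𝒯, H t = i) ∨
    (∃ J : Finset (Fin n), J.card ≤ r * l ∧
        ∀ z : Fin r → Fin n, (∀ j, z j ∉ J) →
          ∃ 𝒯 : Set (List (Set β)), 𝒯.Nonempty ∧ prec l m 𝒯 𝒯₀ ∧
            ∀ t ∈ 𝒯, ∀ j : Fin r, (H t, z j) ∈ W) := by
  classical
  by_cases hA1 : (∃ i : Fin n, ∃ 𝒯 : Set (List (Set β)), 𝒯.Nonempty ∧ prec l m 𝒯 𝒯₀ ∧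
      ∀ t ∈ 𝒯, H t = i)
  · exact Or.inl hA1
  right
  by_contra hA2
  push_neg at hA2
  -- basic numeric facts
  have hl2 : (2 : ℝ) ≤ (l : ℝ) := by exact_mod_cast hl
  have h2l : (0 : ℝ) < 2 * (l : ℝ) := by linarith
  have hl0 : (l : ℝ) ≠ 0 := by linarith
  -- the weight function
  set w : List (Set β) → ℝ := fun s => (dp (ext m 𝒯₀ s) : ℝ) with hw_def
  have hw : ∀ s, 0 ≤ w s := fun s => Nat.cast_nonneg _
  have hGood0 : Good m w 1 𝒯₀ := by
    refine ⟨h𝒯₀, fun t ht => (h𝒯₀m t ht).1, fun s hs => ?_⟩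
    rw [one_mul]
  have good_prec : ∀ 𝒯 : Set (List (Set β)), 𝒯 ⊆ 𝒯₀ →
      Good m w (1 / (2 * (l : ℝ))) 𝒯 → prec l m 𝒯 𝒯₀ := by
    intro 𝒯 hsub hG
    refine ⟨hsub, ?_⟩
    intro t ht
    have h1 := hG.2.2 t ht
    have hwt : w t = (dp (ext m 𝒯₀ t) : ℝ) := rfl
    show (dp (ext m 𝒯₀ t) : ℝ) / (2 * (l : ℝ)) ≤ (dp (ext m 𝒯 t) : ℝ)
    calc (dp (ext m 𝒯₀ t) : ℝ) / (2 * (l : ℝ))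
        = 1 / (2 * (l : ℝ)) * (dp (ext m 𝒯₀ t) : ℝ) := by ring
      _ = 1 / (2 * (l : ℝ)) * w t := by rw [hwt]
      _ ≤ (dp (ext m 𝒯 t) : ℝ) := h1
  -- the spoiling sets
  set Q : Finset (Fin n) → Set (List (Set β)) := fun Rf => {t | ∃ b ∈ Rf, (H t, b) ∉ W}
    with hQ_def
  -- construct l pairwise disjoint "bad" sets
  have Pfam : ∀ s : ℕ, s ≤ l → ∃ f : Fin s → Finset (Fin n),
      (∀ j, (f j).card ≤ r) ∧
      (∀ j, ¬ ∃ 𝒯, 𝒯 ⊆ 𝒯₀ \ Q (f j) ∧ Good m w (1 / (2 * (l : ℝ))) 𝒯) ∧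
      (∀ j j', j ≠ j' → Disjoint (f j) (f j')) := by
    intro s
    induction s with
    | zero =>
      exact fun _ => ⟨fun j => j.elim0, fun j => j.elim0, fun j => j.elim0,
        fun j => j.elim0⟩
    | succ p ihp =>
      intro hpl
      obtain ⟨f, hcard, hbad, hdisj⟩ := ihp (by omega)
      set J : Finset (Fin n) := Finset.univ.biUnion f with hJ
      have hJcard : J.card ≤ r * l := by
        have h1 : J.card ≤ ∑ j, (f j).card := Finset.card_biUnion_le
        have h2 : ∑ j, (f j).card ≤ ∑ _j : Fin p, r :=
          Finset.sum_le_sum (fun j _ => hcard j)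
        have h3 : ∑ _j : Fin p, r = p * r := by simp [Finset.sum_const, mul_comm]
        have h4 : p * r ≤ l * r := Nat.mul_le_mul (by omega) le_rfl
        have h5 : l * r = r * l := Nat.mul_comm l r
        omega
      obtain ⟨z, hz, hzbad⟩ := hA2 J hJcard
      set Rz : Finset (Fin n) := Finset.image z Finset.univ with hRz
      have hRzcard : Rz.card ≤ r := le_trans Finset.card_image_le (by simp)
      have hRzbad : ¬ ∃ 𝒯, 𝒯 ⊆ 𝒯₀ \ Q Rz ∧ Good m w (1 / (2 * (l : ℝ))) 𝒯 := by
        rintro ⟨𝒯, hsub, hGd⟩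
        have hprec := good_prec 𝒯 (fun x hx => (hsub hx).1) hGd
        obtain ⟨t, ht, hj⟩ := hzbad 𝒯 hGd.1 hprec
        obtain ⟨j, hjW⟩ := hj
        have hnotQ : t ∉ Q Rz := (hsub ht).2
        exact hnotQ ⟨z j, Finset.mem_image_of_mem z (Finset.mem_univ j), hjW⟩
      have hdisjR : ∀ j : Fin p, Disjoint (f j) Rz := by
        intro j
        rw [Finset.disjoint_right]
        intro a haR haf
        obtain ⟨i, _, rfl⟩ := Finset.mem_image.mp haR
        exact hz i (Finset.mem_biUnion.mpr ⟨j, Finset.mem_univ j, haf⟩)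
      refine ⟨Fin.snoc f Rz, ?_, ?_, ?_⟩
      · intro j
        refine Fin.lastCases ?_ ?_ j
        · simpa using hRzcard
        · intro j'; simpa using hcard j'
      · intro j
        refine Fin.lastCases ?_ ?_ j
        · simpa using hRzbad
        · intro j'; simpa using hbad j'
      · intro j j' hne'
        rcases Fin.eq_castSucc_or_eq_last j with ⟨j0, rfl⟩ | rfl
        · rcases Fin.eq_castSucc_or_eq_last j' with ⟨j0', rfl⟩ | rfl
          · have : j0 ≠ j0' := fun h => hne' (by rw [h])
            simpa using hdisj j0 j0' this
          · simpa using hdisjR j0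
        · rcases Fin.eq_castSucc_or_eq_last j' with ⟨j0', rfl⟩ | rfl
          · simpa using (hdisjR j0').symm
          · exact absurd rfl hne'
  obtain ⟨f, hfcard, hfbad, hfdisj⟩ := Pfam l le_rfl
  -- chain: intersect with all the Q (f j)
  have chain : ∀ s : ℕ, s ≤ l → ∃ 𝒯c, 𝒯c ⊆ 𝒯₀ ∧
      (∀ j : Fin l, (j : ℕ) < s → 𝒯c ⊆ Q (f j)) ∧
      Good m w (1 - (s : ℝ) / (2 * (l : ℝ))) 𝒯c := by
    intro s
    induction s with
    | zero =>
      intro _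
      refine ⟨𝒯₀, subset_rfl, fun j hj => absurd hj (by omega), ?_⟩
      have e : (1 : ℝ) - ((0 : ℕ) : ℝ) / (2 * (l : ℝ)) = 1 := by norm_num
      rw [e]
      exact hGood0
    | succ p ihp =>
      intro hpl
      obtain ⟨𝒯c, hsub, hQs, hGd⟩ := ihp (by omega)
      have hple : ((p : ℝ) + 1) ≤ (l : ℝ) := by exact_mod_cast hpl
      have hδ0 : (0 : ℝ) ≤ 1 - ((p : ℝ) + 1) / (2 * (l : ℝ)) := by
        rw [sub_nonneg, div_le_one h2l]
        linarith
      have hδγ : 1 - ((p : ℝ) + 1) / (2 * (l : ℝ)) ≤ 1 - (p : ℝ) / (2 * (l : ℝ)) := by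
        have := (div_le_div_iff_of_pos_right h2l).mpr (show (p : ℝ) ≤ (p : ℝ) + 1 by linarith)
        linarith
      obtain hL | hRt := lemA m w hw (1 - (p : ℝ) / (2 * (l : ℝ)))
        (1 - ((p : ℝ) + 1) / (2 * (l : ℝ))) hδ0 hδγ 𝒯c (Q (f ⟨p, by omega⟩)) hGd
      · obtain ⟨𝒯', h1, h2⟩ := hL
        refine ⟨𝒯', fun x hx => hsub (h1 hx).1, ?_, ?_⟩
        · intro j hj
          rcases Nat.lt_succ_iff_lt_or_eq.mp hj with h | h
          · exact fun x hx => hQs j h (h1 hx).1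
          · have hje : j = ⟨p, by omega⟩ := Fin.ext h
            rw [hje]
            exact fun x hx => (h1 hx).2
        · have e : (1 : ℝ) - ((p + 1 : ℕ) : ℝ) / (2 * (l : ℝ))
              = 1 - ((p : ℝ) + 1) / (2 * (l : ℝ)) := by push_cast; ring
          rw [e]
          exact h2
      · exfalso
        obtain ⟨𝒯', h1, h2⟩ := hRt
        apply hfbad ⟨p, by omega⟩
        have e : (1 - (p : ℝ) / (2 * (l : ℝ))) - (1 - ((p : ℝ) + 1) / (2 * (l : ℝ)))
            = 1 / (2 * (l : ℝ)) := by field_simp; ring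
        rw [e] at h2
        exact ⟨𝒯', fun x hx => ⟨hsub (h1 hx).1, (h1 hx).2⟩, h2⟩
  obtain ⟨𝒯s, hTsub, hTQ, hTGood⟩ := chain l le_rfl
  have h12 : (1 : ℝ) - (l : ℝ) / (2 * (l : ℝ)) = 1 / 2 := by field_simp; ring
  rw [h12] at hTGood
  -- extract l distinct colours
  have colors : ∀ s : ℕ, s ≤ l → ∃ (C : Finset (Fin n)) (𝒯c : Set (List (Set β))),
      C.card = s ∧ 𝒯c ⊆ 𝒯s ∧ Good m w (1 / 2 - (s : ℝ) / (2 * (l : ℝ))) 𝒯c ∧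
      (∀ t ∈ 𝒯c, H t ∉ C) ∧ (∀ i ∈ C, ∃ t ∈ 𝒯s, H t = i) := by
    intro s
    induction s with
    | zero =>
      intro _
      refine ⟨∅, 𝒯s, by simp, subset_rfl, ?_, by simp, by simp⟩
      have e : (1 : ℝ) / 2 - ((0 : ℕ) : ℝ) / (2 * (l : ℝ)) = 1 / 2 := by norm_num
      rw [e]
      exact hTGood
    | succ p ihp =>
      intro hpl
      obtain ⟨C, 𝒯c, hCcard, hsub, hGd, hnotC, hreps⟩ := ihp (by omega)
      obtain ⟨t0, ht0⟩ := hGd.1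
      have hple : ((p : ℝ) + 1) ≤ (l : ℝ) := by exact_mod_cast hpl
      have hδγ : 1 / (2 * (l : ℝ)) ≤ 1 / 2 - (p : ℝ) / (2 * (l : ℝ)) := by
        rw [le_sub_iff_add_le, ← add_div, div_le_div_iff₀ h2l (by norm_num : (0:ℝ) < 2)]
        linarith
      obtain hL | hRt := lemA m w hw (1 / 2 - (p : ℝ) / (2 * (l : ℝ)))
        (1 / (2 * (l : ℝ))) (by positivity) hδγ 𝒯c {t | H t = H t0} hGd
      · exfalso
        apply hA1
        obtain ⟨𝒯', h1, h2⟩ := hL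
        exact ⟨H t0, 𝒯', h2.1, good_prec 𝒯' (fun x hx => hTsub (hsub (h1 hx).1)) h2,
          fun t ht => (h1 ht).2⟩
      · obtain ⟨𝒯', h1, h2⟩ := hRt
        refine ⟨insert (H t0) C, 𝒯', ?_, fun x hx => hsub (h1 hx).1, ?_, ?_, ?_⟩
        · rw [Finset.card_insert_of_notMem (hnotC t0 ht0), hCcard]
        · have e : (1 : ℝ) / 2 - ((p + 1 : ℕ) : ℝ) / (2 * (l : ℝ))
              = (1 / 2 - (p : ℝ) / (2 * (l : ℝ))) - 1 / (2 * (l : ℝ)) := by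
            push_cast; field_simp; ring
          rw [e]
          exact h2
        · intro t ht
          simp only [Finset.mem_insert, not_or]
          exact ⟨(h1 ht).2, hnotC t (h1 ht).1⟩
        · intro i hi
          rcases Finset.mem_insert.mp hi with rfl | hiC
          · exact ⟨t0, hsub ht0, rfl⟩
          · exact hreps i hiC
  obtain ⟨C, 𝒯f, hCcard, hfsub, _, _, hreps⟩ := colors l le_rfl
  -- contradiction with hW
  obtain ⟨i, hiC, j, hij⟩ := hW C hCcard f (fun j => le_trans (hfcard j) hr) hfdisj
  obtain ⟨t, htTs, hHt⟩ := hreps i hiC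
  have htQ : t ∈ Q (f j) := hTQ j j.2 htTs
  obtain ⟨b, hb, hnW⟩ := htQ
  rw [hHt] at hnW
  exact hnW (hij b hb)
end

section
/- Let ⟨n_k⟩_{k∈ℕ} be integers with n_k ≥ 2^k and ⟨W_k⟩_{k∈ℕ} with W_k ⊆ n_k × n_k and #(W_k) ≤ 2^{−k}·n_k² for every k. Let X = ∏_{k∈ℕ} n_k with the product measure μ of the uniform probabilities, for each k let 𝓘_k = { I ⊆ n_k : #(I) ≤ k and (i,j) ∉ W_k for all distinct i, j ∈ I }, for I ⊆ n_k let H_{kI} = { x ∈ X : x(k) ∈ I }, and let A = { χH_{kI} : k ∈ ℕ, I ∈ 𝓘_k } ⊆ ℝ^X, where χH denotes the characteristic function of H. Then A is not stable with respect to μ. -/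
open MeasureTheory
open scoped ENNReal

/-- Given a probability space `(X, Σ, μ)`, a set `A ⊆ ℝ^X` is *stable* if whenever `α < β` are
reals, `E ∈ Σ` and `μE > 0`, there are integers `k, l ≥ 1` such that the set
`{(x,y) ∈ E^k × E^l : ∃ f ∈ A, f(x(i)) ≤ α ∀ i < k and f(y(j)) ≥ β ∀ j < l}` has outer measure
strictly less than `(μE)^{k+l}` for the product (outer) measure on `X^k × X^l`. -/
def IsStable {X : Type*} [MeasurableSpace X] (μ : Measure X) (A : Set (X → ℝ)) : Prop :=
  ∀ a b : ℝ, a < b → ∀ E : Set X, MeasurableSet E → 0 < μ E →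
    ∃ k l : ℕ, 1 ≤ k ∧ 1 ≤ l ∧
      ((Measure.pi fun _ : Fin k => μ).prod (Measure.pi fun _ : Fin l => μ))
        {p : (Fin k → X) × (Fin l → X) |
          (∀ i, p.1 i ∈ E) ∧ (∀ j, p.2 j ∈ E) ∧
          ∃ f ∈ A, (∀ i, f (p.1 i) ≤ a) ∧ (∀ j, b ≤ f (p.2 j))} < (μ E) ^ (k + l)

/-- Let `⟨n_k⟩` be integers with `n_k ≥ 2^k`, `W_k ⊆ n_k × n_k` with `#(W_k) ≤ 2^{-k}·n_k²`.
Let `X = ∏_k n_k` with the product measure `μ` of the uniform probabilities (characterized by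
its values on cylinders), let `𝓘_k = {I ⊆ n_k : #(I) ≤ k, (i,j) ∉ W_k for distinct i,j ∈ I}`,
`H_{kI} = {x : x(k) ∈ I}`, and `A = {χH_{kI} : k ∈ ℕ, I ∈ 𝓘_k} ⊆ ℝ^X`.  Then `A` is not
stable with respect to `μ`. -/
theorem stmt_7 (n : ℕ → ℕ) (hn : ∀ k, 2 ^ k ≤ n k)
    (W : ∀ k, Finset (Fin (n k) × Fin (n k)))
    (hW : ∀ k, ((W k).card : ℝ) ≤ ((n k : ℝ)) ^ 2 / 2 ^ k)
    (μ : Measure (∀ k, Fin (n k))) (hμ : IsProbabilityMeasure μ)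
    (hcyl : ∀ s : Finset ℕ, ∀ t : ∀ k, Finset (Fin (n k)),
      μ {x | ∀ k ∈ s, x k ∈ t k} = ∏ k ∈ s, ((t k).card : ℝ≥0∞) / (n k : ℝ≥0∞)) :
    ¬ IsStable μ
      {f : (∀ k, Fin (n k)) → ℝ |
        ∃ k : ℕ, ∃ I : Finset (Fin (n k)),
          (I.card ≤ k ∧ ∀ i ∈ I, ∀ j ∈ I, i ≠ j → (i, j) ∉ W k) ∧
          f = Set.indicator {x : ∀ k', Fin (n k') | x k ∈ I} (fun _ => (1 : ℝ))} := by
  classical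
  haveI := hμ
  -- single-coordinate measure
  have hcoord : ∀ (m : ℕ) (v : Fin (n m)), μ {x : (∀ k', Fin (n k')) | x m = v} = 1 / (n m : ℝ≥0∞) := by
    intro m v
    have h := hcyl {m} (fun k' => Finset.univ.filter (fun z : Fin (n k') => (z : ℕ) = (v : ℕ)))
    have hcard : (Finset.univ.filter (fun z : Fin (n m) => (z : ℕ) = (v : ℕ))) = {v} := by
      ext z; simp [Fin.val_inj]
    have hset : {x : (∀ k', Fin (n k')) | ∀ k ∈ ({m} : Finset ℕ),
        x k ∈ Finset.univ.filter (fun z : Fin (n k) => (z : ℕ) = (v : ℕ))} = {x : (∀ k', Fin (n k')) | x m = v} := by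
      ext x
      simp [Fin.val_inj]
    rw [hset] at h
    rw [h, Finset.prod_singleton, hcard]
    simp
  intro hstab
  obtain ⟨k, l, hk, hl, hlt⟩ := hstab 0 1 one_pos Set.univ MeasurableSet.univ (by simp)
  set νk := Measure.pi fun _ : Fin k => μ with hνk
  set νl := Measure.pi fun _ : Fin l => μ with hνl
  set ν := νk.prod νl with hν
  haveI : IsProbabilityMeasure νk := Measure.pi.instIsProbabilityMeasure (μ := fun _ : Fin k => μ)
  haveI : IsProbabilityMeasure νl := Measure.pi.instIsProbabilityMeasure (μ := fun _ : Fin l => μ)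
  haveI : IsProbabilityMeasure ν := by infer_instance
  -- coordinate sets
  have hCmeas : ∀ (m : ℕ) (v : Fin (n m)), MeasurableSet {x : (∀ k', Fin (n k')) | x m = v} := by
    intro m v
    have : Measurable (fun x : (∀ k', Fin (n k')) => x m) := measurable_pi_apply m
    exact this (measurableSet_singleton v)
  -- one coordinate in νk
  have honek : ∀ (m : ℕ) (v : Fin (n m)) (i : Fin k),
      νk {x : Fin k → (∀ k', Fin (n k')) | x i m = v} = 1 / (n m : ℝ≥0∞) := by
    intro m v i
    have hs : {x : Fin k → (∀ k', Fin (n k')) | x i m = v}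
        = Set.pi Set.univ (fun t => if t = i then {z : (∀ k', Fin (n k')) | z m = v} else Set.univ) := by
      ext x
      simp only [Set.mem_pi, Set.mem_univ, true_implies, Set.mem_setOf_eq]
      constructor
      · intro h t
        by_cases ht : t = i
        · subst ht; simpa using h
        · simp [ht]
      · intro h
        have := h i
        simpa using this
    rw [hs, hνk, Measure.pi_pi]
    have : ∀ t : Fin k, μ (if t = i then {z : (∀ k', Fin (n k')) | z m = v} else Set.univ)
        = if t = i then 1 / (n m : ℝ≥0∞) else 1 := by
      intro t
      by_cases ht : t = i <;> simp [ht, hcoord]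
    simp only [this]
    rw [Finset.prod_ite_eq' Finset.univ i (fun _ => 1 / (n m : ℝ≥0∞))]
    simp
  -- two coordinates in νl
  have htwol : ∀ (m : ℕ) (u v : Fin (n m)) (j j' : Fin l), j ≠ j' →
      νl {y : Fin l → (∀ k', Fin (n k')) | y j m = u ∧ y j' m = v}
        = (1 / (n m : ℝ≥0∞)) * (1 / (n m : ℝ≥0∞)) := by
    intro m u v j j' hjj'
    have hs : {y : Fin l → (∀ k', Fin (n k')) | y j m = u ∧ y j' m = v}
        = Set.pi Set.univ (fun t => if t = j then {z : (∀ k', Fin (n k')) | z m = u}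
            else if t = j' then {z : (∀ k', Fin (n k')) | z m = v} else Set.univ) := by
      ext y
      simp only [Set.mem_pi, Set.mem_univ, true_implies, Set.mem_setOf_eq]
      constructor
      · intro h t
        by_cases ht : t = j
        · subst ht; simp [hjj', h.1]
        · by_cases ht' : t = j'
          · subst ht'; simp [ht, h.2]
          · simp [ht, ht']
      · intro h
        constructor
        · have := h j; simpa using this
        · have := h j'
          simpa [(Ne.symm hjj' : j' ≠ j)] using this
    rw [hs, hνl, Measure.pi_pi]
    have hval : ∀ t : Fin l, μ (if t = j then {z : (∀ k', Fin (n k')) | z m = u}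
            else if t = j' then {z : (∀ k', Fin (n k')) | z m = v} else Set.univ)
        = if t = j then 1 / (n m : ℝ≥0∞) else if t = j' then 1 / (n m : ℝ≥0∞) else 1 := by
      intro t
      by_cases ht : t = j
      · simp [ht, hcoord]
      · by_cases ht' : t = j' <;> simp [ht, ht', hcoord, (Ne.symm hjj' : j' ≠ j)]
    simp only [hval]
    rw [← Finset.prod_subset (Finset.subset_univ ({j, j'} : Finset (Fin l)))
      (by
        intro t _ ht
        simp only [Finset.mem_insert, Finset.mem_singleton] at ht
        push_neg at ht
        simp [ht.1, ht.2])]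
    rw [Finset.prod_pair hjj']
    simp [hjj', (Ne.symm hjj' : j' ≠ j)]
  -- single coordinate in νl
  have honel : ∀ (m : ℕ) (v : Fin (n m)) (j : Fin l),
      νl {y : Fin l → (∀ k', Fin (n k')) | y j m = v} = 1 / (n m : ℝ≥0∞) := by
    intro m v j
    have hs : {y : Fin l → (∀ k', Fin (n k')) | y j m = v}
        = Set.pi Set.univ (fun t => if t = j then {z : (∀ k', Fin (n k')) | z m = v} else Set.univ) := by
      ext y
      simp only [Set.mem_pi, Set.mem_univ, true_implies, Set.mem_setOf_eq]
      constructor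
      · intro h t
        by_cases ht : t = j
        · subst ht; simpa using h
        · simp [ht]
      · intro h
        have := h j
        simpa using this
    rw [hs, hνl, Measure.pi_pi]
    have : ∀ t : Fin l, μ (if t = j then {z : (∀ k', Fin (n k')) | z m = v} else Set.univ)
        = if t = j then 1 / (n m : ℝ≥0∞) else 1 := by
      intro t
      by_cases ht : t = j <;> simp [ht, hcoord]
    simp only [this]
    rw [Finset.prod_ite_eq' Finset.univ j (fun _ => 1 / (n m : ℝ≥0∞))]
    simp
  -- basic facts about n m
  have hn0 : ∀ m, (n m : ℝ≥0∞) ≠ 0 := by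
    intro m
    have : 0 < n m := lt_of_lt_of_le (Nat.pow_pos (by norm_num : 0 < 2)) (hn m)
    exact_mod_cast this.ne'
  have hnt : ∀ m, (n m : ℝ≥0∞) ≠ ∞ := fun m => ENNReal.natCast_ne_top _
  have h2mne : ∀ m : ℕ, ((2 : ℝ≥0∞)) ^ m ≠ 0 := fun m => pow_ne_zero m (by norm_num)
  have h2mnt : ∀ m : ℕ, ((2 : ℝ≥0∞)) ^ m ≠ ∞ := fun m => ENNReal.pow_ne_top ENNReal.ofNat_ne_top
  have hinv : ∀ m, 1 / (n m : ℝ≥0∞) ≤ 1 / (2 : ℝ≥0∞) ^ m := by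
    intro m
    rw [one_div, one_div]
    rw [ENNReal.inv_le_inv]
    have : ((2 ^ m : ℕ) : ℝ≥0∞) ≤ (n m : ℝ≥0∞) := by exact_mod_cast Nat.cast_le.2 (hn m)
    simpa using this
  -- measurability of coincidence maps
  have hf1 : ∀ (m : ℕ) (i : Fin k),
      Measurable (fun p : (Fin k → (∀ k', Fin (n k'))) × (Fin l → (∀ k', Fin (n k'))) => p.1 i m) := by
    intro m i
    exact (measurable_pi_apply m).comp ((measurable_pi_apply i).comp measurable_fst)
  have hf2 : ∀ (m : ℕ) (j : Fin l),
      Measurable (fun p : (Fin k → (∀ k', Fin (n k'))) × (Fin l → (∀ k', Fin (n k'))) => p.2 j m) := by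
    intro m j
    exact (measurable_pi_apply m).comp ((measurable_pi_apply j).comp measurable_snd)
  -- the good sets
  set G : ℕ → Set ((Fin k → (∀ k', Fin (n k'))) × (Fin l → (∀ k', Fin (n k')))) :=
    fun m => {p | (∀ i j, p.1 i m ≠ p.2 j m) ∧ ∀ j j', j ≠ j' → (p.2 j m, p.2 j' m) ∉ W m}
    with hG
  have hGmeas : ∀ m, MeasurableSet (G m) := by
    intro m
    have hrw : G m = (⋂ i, ⋂ j, {p : (Fin k → (∀ k', Fin (n k'))) × (Fin l → (∀ k', Fin (n k'))) |
          p.1 i m = p.2 j m}ᶜ) ∩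
        ⋂ j, ⋂ j', ⋂ (_ : j ≠ j'),
          ((fun p : (Fin k → (∀ k', Fin (n k'))) × (Fin l → (∀ k', Fin (n k'))) =>
            (p.2 j m, p.2 j' m)) ⁻¹' (↑(W m) : Set (Fin (n m) × Fin (n m))))ᶜ := by
      ext p
      simp [hG]
    rw [hrw]
    refine MeasurableSet.inter ?_ ?_
    · exact .iInter fun i => .iInter fun j =>
        (measurableSet_eq_fun (hf1 m i) (hf2 m j)).compl
    · exact .iInter fun j => .iInter fun j' => .iInter fun _ =>
        (((hf2 m j).prodMk (hf2 m j')) (W m).measurableSet).compl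
  -- bound for coincidences between the two blocks
  have hBad1 : ∀ (m : ℕ) (i : Fin k) (j : Fin l),
      ν {p : (Fin k → (∀ k', Fin (n k'))) × (Fin l → (∀ k', Fin (n k'))) | p.1 i m = p.2 j m}
        ≤ 1 / (2 : ℝ≥0∞) ^ m := by
    intro m i j
    have hrw : {p : (Fin k → (∀ k', Fin (n k'))) × (Fin l → (∀ k', Fin (n k'))) | p.1 i m = p.2 j m}
        = ⋃ v : Fin (n m), ({x | x i m = v} ×ˢ {y | y j m = v}) := by
      ext p
      simp only [Set.mem_iUnion, Set.mem_prod, Set.mem_setOf_eq]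
      exact ⟨fun h => ⟨p.2 j m, h, rfl⟩, fun ⟨v, h1, h2⟩ => h1.trans h2.symm⟩
    calc ν {p : (Fin k → (∀ k', Fin (n k'))) × (Fin l → (∀ k', Fin (n k'))) | p.1 i m = p.2 j m}
        ≤ ∑' v : Fin (n m), ν ({x | x i m = v} ×ˢ {y | y j m = v}) := by
          rw [hrw]; exact measure_iUnion_le _
      _ = ∑ v : Fin (n m), νk {x | x i m = v} * νl {y | y j m = v} := by
          rw [tsum_fintype]
          exact Finset.sum_congr rfl fun v _ => Measure.prod_prod _ _
      _ = (n m : ℝ≥0∞) * (1 / (n m : ℝ≥0∞) * (1 / (n m : ℝ≥0∞))) := by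
          simp only [honek, honel, Finset.sum_const, Finset.card_univ, Fintype.card_fin,
            nsmul_eq_mul]
      _ = 1 / (n m : ℝ≥0∞) := by
          rw [one_div, ← mul_assoc, ENNReal.mul_inv_cancel (hn0 m) (hnt m), one_mul]
      _ ≤ 1 / (2 : ℝ≥0∞) ^ m := hinv m
  -- bound for W-related pairs
  have hWn : ∀ m, (W m).card * 2 ^ m ≤ n m * n m := by
    intro m
    have h := (le_div_iff₀ (by positivity : (0:ℝ) < 2 ^ m)).1 (hW m)
    have : ((W m).card * 2 ^ m : ℝ) ≤ ((n m : ℝ)) * (n m : ℝ) := by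
      calc ((W m).card * 2 ^ m : ℝ) ≤ (n m : ℝ) ^ 2 := h
        _ = (n m : ℝ) * (n m : ℝ) := sq (n m : ℝ) ▸ by ring
    exact_mod_cast this
  have hBad2 : ∀ (m : ℕ) (j j' : Fin l), j ≠ j' →
      ν {p : (Fin k → (∀ k', Fin (n k'))) × (Fin l → (∀ k', Fin (n k'))) |
          (p.2 j m, p.2 j' m) ∈ W m} ≤ 1 / (2 : ℝ≥0∞) ^ m := by
    intro m j j' hjj'
    have hrw : {p : (Fin k → (∀ k', Fin (n k'))) × (Fin l → (∀ k', Fin (n k'))) |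
          (p.2 j m, p.2 j' m) ∈ W m}
        = Set.univ ×ˢ {y : Fin l → (∀ k', Fin (n k')) | (y j m, y j' m) ∈ W m} := by
      ext p; simp
    have hrw2 : {y : Fin l → (∀ k', Fin (n k')) | (y j m, y j' m) ∈ W m}
        = ⋃ w ∈ W m, {y : Fin l → (∀ k', Fin (n k')) | y j m = w.1 ∧ y j' m = w.2} := by
      ext y
      simp only [Set.mem_setOf_eq, Set.mem_iUnion]
      constructor
      · intro h; exact ⟨(y j m, y j' m), h, rfl, rfl⟩
      · rintro ⟨w, hw, h1, h2⟩
        have : w = (y j m, y j' m) := by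
          cases w; simp_all
        rwa [this] at hw
    rw [hrw, Measure.prod_prod, measure_univ, one_mul, hrw2]
    calc νl (⋃ w ∈ W m, {y : Fin l → (∀ k', Fin (n k')) | y j m = w.1 ∧ y j' m = w.2})
        ≤ ∑ w ∈ W m, νl {y : Fin l → (∀ k', Fin (n k')) | y j m = w.1 ∧ y j' m = w.2} :=
          measure_biUnion_finset_le _ _
      _ = ((W m).card : ℝ≥0∞) * (1 / (n m : ℝ≥0∞) * (1 / (n m : ℝ≥0∞))) := by
          rw [Finset.sum_congr rfl fun w _ => htwol m w.1 w.2 j j' hjj']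
          simp [Finset.sum_const, nsmul_eq_mul]
      _ ≤ 1 / (2 : ℝ≥0∞) ^ m := by
          rw [one_div, one_div, ← ENNReal.mul_inv (Or.inl (hn0 m)) (Or.inl (hnt m)),
            ← div_eq_mul_inv]
          rw [ENNReal.div_le_iff_le_mul (Or.inl (mul_ne_zero (hn0 m) (hn0 m)))
            (Or.inr (ENNReal.inv_ne_zero.2 (h2mnt m)))]
          have hcast : ((W m).card : ℝ≥0∞) * (2 : ℝ≥0∞) ^ m ≤ (n m : ℝ≥0∞) * (n m : ℝ≥0∞) := by
            have := hWn m
            exact_mod_cast Nat.cast_le.2 this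
          calc ((W m).card : ℝ≥0∞)
              = ((2 : ℝ≥0∞) ^ m)⁻¹ * (((W m).card : ℝ≥0∞) * (2 : ℝ≥0∞) ^ m) := by
                rw [mul_comm (((W m).card : ℝ≥0∞)) _, ← mul_assoc,
                  ENNReal.inv_mul_cancel (h2mne m) (h2mnt m), one_mul]
            _ ≤ ((2 : ℝ≥0∞) ^ m)⁻¹ * ((n m : ℝ≥0∞) * (n m : ℝ≥0∞)) :=
                mul_le_mul_right hcast _
  -- the complement of the good set is small
  have hGc : ∀ m, ν (G m)ᶜ ≤ ((k * l + l * l : ℕ) : ℝ≥0∞) * (1 / (2 : ℝ≥0∞) ^ m) := by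
    intro m
    set B1 : Fin k → Fin l → Set ((Fin k → (∀ k', Fin (n k'))) × (Fin l → (∀ k', Fin (n k')))) :=
      fun i j => {p | p.1 i m = p.2 j m} with hB1
    set B2 : Fin l → Fin l → Set ((Fin k → (∀ k', Fin (n k'))) × (Fin l → (∀ k', Fin (n k')))) :=
      fun j j' => if j = j' then ∅ else {p | (p.2 j m, p.2 j' m) ∈ W m} with hB2
    have hsub : (G m)ᶜ ⊆ (⋃ i, ⋃ j, B1 i j) ∪ ⋃ j, ⋃ j', B2 j j' := by
      intro p hp
      simp only [hG, Set.mem_compl_iff, Set.mem_setOf_eq, not_and_or, not_forall] at hp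
      rcases hp with h | h
      · obtain ⟨i, j, hij⟩ := h
        left
        refine Set.mem_iUnion.2 ⟨i, Set.mem_iUnion.2 ⟨j, ?_⟩⟩
        simpa [hB1] using hij
      · obtain ⟨j, j', hjj⟩ := h
        rw [Classical.not_imp] at hjj
        right
        refine Set.mem_iUnion.2 ⟨j, Set.mem_iUnion.2 ⟨j', ?_⟩⟩
        simp only [hB2, if_neg hjj.1]
        simpa using hjj.2
    have hB2le : ∀ j j', ν (B2 j j') ≤ 1 / (2 : ℝ≥0∞) ^ m := by
      intro j j'
      by_cases h : j = j'
      · simp [hB2, h]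
      · rw [hB2]
        simpa [h] using hBad2 m j j' h
    calc ν (G m)ᶜ ≤ ν ((⋃ i, ⋃ j, B1 i j) ∪ ⋃ j, ⋃ j', B2 j j') := measure_mono hsub
      _ ≤ ν (⋃ i, ⋃ j, B1 i j) + ν (⋃ j, ⋃ j', B2 j j') := measure_union_le _ _
      _ ≤ (∑' i : Fin k, ∑' j : Fin l, ν (B1 i j))
          + ∑' j : Fin l, ∑' j' : Fin l, ν (B2 j j') := by
          refine add_le_add ?_ ?_
          · exact le_trans (measure_iUnion_le _) (ENNReal.tsum_le_tsum fun i => measure_iUnion_le _)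
          · exact le_trans (measure_iUnion_le _) (ENNReal.tsum_le_tsum fun j => measure_iUnion_le _)
      _ ≤ (∑' _ : Fin k, ∑' _ : Fin l, 1 / (2 : ℝ≥0∞) ^ m)
          + ∑' _ : Fin l, ∑' _ : Fin l, 1 / (2 : ℝ≥0∞) ^ m := by
          refine add_le_add ?_ ?_
          · exact ENNReal.tsum_le_tsum fun i => ENNReal.tsum_le_tsum fun j => hBad1 m i j
          · exact ENNReal.tsum_le_tsum fun j => ENNReal.tsum_le_tsum fun j' => hB2le j j'
      _ = ((k * l + l * l : ℕ) : ℝ≥0∞) * (1 / (2 : ℝ≥0∞) ^ m) := by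
          simp only [tsum_fintype, Finset.sum_const, Finset.card_univ, Fintype.card_fin,
            nsmul_eq_mul]
          push_cast
          ring
  -- the union of the good sets has full measure
  set U : Set ((Fin k → (∀ k', Fin (n k'))) × (Fin l → (∀ k', Fin (n k')))) :=
    ⋃ m, G (l + m) with hUdef
  have hUmeas : MeasurableSet U := MeasurableSet.iUnion fun m => hGmeas (l + m)
  have hU0 : ν Uᶜ = 0 := by
    refine le_antisymm ?_ (zero_le)
    have h1 : Filter.Tendsto (fun m : ℕ => ((2 : ℝ≥0∞)⁻¹) ^ m) Filter.atTop (nhds 0) :=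
      ENNReal.tendsto_pow_atTop_nhds_zero_of_lt_one (by
        rw [ENNReal.inv_lt_one]; norm_num)
    have h2 := h1.comp (Filter.tendsto_add_atTop_nat l)
    have h3 : Filter.Tendsto (fun m : ℕ => 1 / (2 : ℝ≥0∞) ^ (l + m)) Filter.atTop (nhds 0) := by
      refine h2.congr fun m => ?_
      show (2⁻¹ : ℝ≥0∞) ^ (m + l) = 1 / 2 ^ (l + m)
      rw [← ENNReal.inv_pow, one_div, add_comm l m]
    have h4 := ENNReal.Tendsto.const_mul h3
      (Or.inr (ENNReal.natCast_ne_top (k * l + l * l)))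
    rw [mul_zero] at h4
    refine ge_of_tendsto' h4 fun m => ?_
    calc ν Uᶜ ≤ ν (G (l + m))ᶜ := by
          refine measure_mono (Set.compl_subset_compl.2 ?_)
          exact Set.subset_iUnion (fun m => G (l + m)) m
      _ ≤ _ := hGc (l + m)
  have hU1 : ν U = 1 := (prob_compl_eq_zero_iff hUmeas).1 hU0
  -- the union of the good sets is contained in the target set
  have hsub : U ⊆ {p : (Fin k → (∀ k', Fin (n k'))) × (Fin l → (∀ k', Fin (n k'))) |
      (∀ i, p.1 i ∈ Set.univ) ∧ (∀ j, p.2 j ∈ Set.univ) ∧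
      ∃ f ∈ {f : (∀ k', Fin (n k')) → ℝ |
        ∃ k : ℕ, ∃ I : Finset (Fin (n k)),
          (I.card ≤ k ∧ ∀ i ∈ I, ∀ j ∈ I, i ≠ j → (i, j) ∉ W k) ∧
          f = Set.indicator {x : ∀ k', Fin (n k') | x k ∈ I} (fun _ => (1 : ℝ))},
        (∀ i, f (p.1 i) ≤ 0) ∧ (∀ j, (1:ℝ) ≤ f (p.2 j))} := by
    intro p hp
    obtain ⟨m, hpm⟩ := Set.mem_iUnion.1 hp
    obtain ⟨h1, h2⟩ := hpm
    refine ⟨fun i => Set.mem_univ _, fun j => Set.mem_univ _,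
      Set.indicator {x : ∀ k', Fin (n k') | x (l + m) ∈
        Finset.image (fun j => p.2 j (l + m)) Finset.univ} (fun _ => (1 : ℝ)),
      ⟨l + m, Finset.image (fun j => p.2 j (l + m)) Finset.univ, ⟨?_, ?_⟩, rfl⟩, ?_, ?_⟩
    · exact Finset.card_image_le.trans (by simpa using Nat.le_add_right l m)
    · intro u hu v hv huv
      simp only [Finset.mem_image, Finset.mem_univ, true_and] at hu hv
      obtain ⟨j, rfl⟩ := hu
      obtain ⟨j', rfl⟩ := hv
      exact h2 j j' (fun h => huv (by rw [h]))
    · intro i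
      have hni : p.1 i ∉ {x : ∀ k', Fin (n k') | x (l + m) ∈
          Finset.image (fun j => p.2 j (l + m)) Finset.univ} := by
        simp only [Set.mem_setOf_eq, Finset.mem_image, Finset.mem_univ, true_and, not_exists]
        intro j hj
        exact h1 i j hj.symm
      rw [Set.indicator_of_notMem hni]
    · intro j
      have hmi : p.2 j ∈ {x : ∀ k', Fin (n k') | x (l + m) ∈
          Finset.image (fun j => p.2 j (l + m)) Finset.univ} := by
        simp only [Set.mem_setOf_eq, Finset.mem_image, Finset.mem_univ, true_and]
        exact ⟨j, rfl⟩
      rw [Set.indicator_of_mem hmi]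
  have hge : (1 : ℝ≥0∞) ≤ ν {p : (Fin k → (∀ k', Fin (n k'))) × (Fin l → (∀ k', Fin (n k'))) |
      (∀ i, p.1 i ∈ Set.univ) ∧ (∀ j, p.2 j ∈ Set.univ) ∧
      ∃ f ∈ {f : (∀ k', Fin (n k')) → ℝ |
        ∃ k : ℕ, ∃ I : Finset (Fin (n k)),
          (I.card ≤ k ∧ ∀ i ∈ I, ∀ j ∈ I, i ≠ j → (i, j) ∉ W k) ∧
          f = Set.indicator {x : ∀ k', Fin (n k') | x k ∈ I} (fun _ => (1 : ℝ))},
        (∀ i, f (p.1 i) ≤ 0) ∧ (∀ j, (1:ℝ) ≤ f (p.2 j))} := hU1 ▸ measure_mono hsub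
  rw [measure_univ, one_pow] at hlt
  exact absurd hlt (not_lt.2 hge)
end

section
/- Let ⟨n_k⟩_{k∈ℕ} be strictly positive integers and W_k ⊆ n_k × n_k for each k. Let X = ∏_{k∈ℕ} n_k, 𝓘_k = { I ⊆ n_k : #(I) ≤ k and (i,j) ∉ W_k for all distinct i, j ∈ I }, H_{kI} = { x ∈ X : x(k) ∈ I }, A = { χH_{kI} : k ∈ ℕ, I ∈ 𝓘_k } ⊆ ℝ^X, and let Z be the closure of A in ℝ^X for the product (pointwise convergence) topology. Then every element of Z \ A is the characteristic function χE of a set E ⊆ X such that (i) whenever x ∈ E, x′ ∈ X and {k : x(k) ≠ x′(k)} is finite, then x′ ∈ E, and (ii) (x,y) ∉ R for all x, y ∈ E, where R = { (x,y) ∈ X × X : (x(k), y(k)) ∈ W_k for every k and {k : x(k) = y(k)} is finite }. -/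
/-- Let `⟨n_k⟩` be strictly positive integers, `W_k ⊆ n_k × n_k`, `X = ∏_k n_k`,
`𝓘_k = {I ⊆ n_k : #(I) ≤ k, (i,j) ∉ W_k for distinct i,j ∈ I}`, `H_{kI} = {x : x(k) ∈ I}`,
`A = {χH_{kI} : k ∈ ℕ, I ∈ 𝓘_k} ⊆ ℝ^X`, and `Z` the closure of `A` in `ℝ^X` for the topology
of pointwise convergence.  Then every `u ∈ Z \ A` is the characteristic function `χE` of a set
`E ⊆ X` such that (i) `E` is invariant under changing finitely many coordinates, and (ii)
`(x,y) ∉ R` for all `x, y ∈ E`, where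
`R = {(x,y) : (x(k),y(k)) ∈ W_k ∀ k, {k : x(k) = y(k)} finite}`. -/
theorem stmt_8 (n : ℕ → ℕ) (hn : ∀ k, 0 < n k)
    (W : ∀ k, Finset (Fin (n k) × Fin (n k)))
    (A : Set ((∀ k, Fin (n k)) → ℝ))
    (hA : A = {f | ∃ k : ℕ, ∃ I : Finset (Fin (n k)),
      (I.card ≤ k ∧ ∀ i ∈ I, ∀ j ∈ I, i ≠ j → (i, j) ∉ W k) ∧
      f = Set.indicator {x : ∀ k', Fin (n k') | x k ∈ I} (fun _ => (1 : ℝ))}) :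
    ∀ u ∈ closure A \ A,
      ∃ E : Set (∀ k, Fin (n k)),
        u = Set.indicator E (fun _ => (1 : ℝ)) ∧
        (∀ x ∈ E, ∀ x' : ∀ k, Fin (n k), {k | x k ≠ x' k}.Finite → x' ∈ E) ∧
        (∀ x ∈ E, ∀ y ∈ E,
          ¬ ((∀ k, (x k, y k) ∈ W k) ∧ {k | x k = y k}.Finite)) := by
  intro u hu
  obtain ⟨huZ, huA⟩ := hu
  -- every element of the closure takes values in {0,1}
  have hval : ∀ x, u x = 0 ∨ u x = 1 := by
    have hc : IsClosed {f : (∀ k, Fin (n k)) → ℝ | ∀ x, f x = 0 ∨ f x = 1} := by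
      have he : {f : (∀ k, Fin (n k)) → ℝ | ∀ x, f x = 0 ∨ f x = 1}
          = ⋂ x, (fun f : (∀ k, Fin (n k)) → ℝ => f x) ⁻¹' ({0, 1} : Set ℝ) := by
        ext f; simp [Set.mem_iInter]
      rw [he]
      exact isClosed_iInter fun x =>
        ((isClosed_singleton.union isClosed_singleton)).preimage (continuous_apply x)
    refine hc.closure_subset_iff.mpr ?_ huZ
    rintro f hf x
    rw [hA] at hf
    obtain ⟨k, I, -, rfl⟩ := hf
    by_cases h : x k ∈ I
    · right; simp [Set.indicator_apply, h]
    · left; simp [Set.indicator_apply, h]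
  set E : Set (∀ k, Fin (n k)) := {x | u x = 1} with hE
  -- `u` is in the closure of the "tail" part of `A`
  have tail : ∀ N : ℕ, u ∈ closure {f | ∃ k : ℕ, N ≤ k ∧ ∃ I : Finset (Fin (n k)),
      (I.card ≤ k ∧ ∀ i ∈ I, ∀ j ∈ I, i ≠ j → (i, j) ∉ W k) ∧
      f = Set.indicator {x : ∀ k', Fin (n k') | x k ∈ I} (fun _ => (1 : ℝ))} := by
    intro N
    set T := {f | ∃ k : ℕ, N ≤ k ∧ ∃ I : Finset (Fin (n k)),
      (I.card ≤ k ∧ ∀ i ∈ I, ∀ j ∈ I, i ≠ j → (i, j) ∉ W k) ∧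
      f = Set.indicator {x : ∀ k', Fin (n k') | x k ∈ I} (fun _ => (1 : ℝ))} with hT
    set B := ⋃ k ∈ Finset.range N, Set.range (fun I : Finset (Fin (n k)) =>
      Set.indicator {x : ∀ k', Fin (n k') | x k ∈ I} (fun _ => (1 : ℝ))) with hB
    have hBfin : B.Finite := by
      apply Set.Finite.biUnion (Finset.range N).finite_toSet
      intro k _
      exact Set.finite_range _
    have hsub : A ⊆ T ∪ (A ∩ B) := by
      intro f hf
      have hf' := hf
      rw [hA] at hf'
      obtain ⟨k, I, hI, rfl⟩ := hf'
      rcases le_or_gt N k with h | h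
      · exact Or.inl ⟨k, h, I, hI, rfl⟩
      · exact Or.inr ⟨hf, Set.mem_biUnion (Finset.mem_range.mpr h) ⟨I, rfl⟩⟩
    have h1 : closure A ⊆ closure T ∪ (A ∩ B) := by
      calc closure A ⊆ closure (T ∪ (A ∩ B)) := closure_mono hsub
        _ = closure T ∪ closure (A ∩ B) := closure_union
        _ = closure T ∪ (A ∩ B) := by
            rw [(hBfin.subset Set.inter_subset_right).isClosed.closure_eq]
    rcases h1 huZ with h | h
    · exact h
    · exact absurd h.1 huA
  -- approximation of `u` at two points, with large witness `k`
  have approx : ∀ (N : ℕ) (x y : ∀ k, Fin (n k)),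
      ∃ k : ℕ, N ≤ k ∧ ∃ I : Finset (Fin (n k)),
        (I.card ≤ k ∧ ∀ i ∈ I, ∀ j ∈ I, i ≠ j → (i, j) ∉ W k) ∧
        ((x k ∈ I ↔ u x = 1) ∧ (y k ∈ I ↔ u y = 1)) := by
    intro N x y
    have hT := tail N
    rw [mem_closure_iff] at hT
    have hUopen : IsOpen {f : (∀ k, Fin (n k)) → ℝ |
        |f x - u x| < 1 ∧ |f y - u y| < 1} := by
      apply IsOpen.inter
      · exact isOpen_lt (((continuous_apply x).sub continuous_const).abs) continuous_const
      · exact isOpen_lt (((continuous_apply y).sub continuous_const).abs) continuous_const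
    obtain ⟨f, ⟨hfx, hfy⟩, k, hk, I, hI, rfl⟩ := hT _ hUopen (by simp)
    have key : ∀ z : ∀ k', Fin (n k'),
        |Set.indicator {x : ∀ k', Fin (n k') | x k ∈ I} (fun _ => (1 : ℝ)) z - u z| < 1 →
        (z k ∈ I ↔ u z = 1) := by
      intro z hz
      rcases hval z with h | h <;> by_cases hm : z k ∈ I <;>
        simp only [Set.indicator_apply, Set.mem_setOf_eq, hm, if_true, if_false, h] at hz ⊢ <;>
        norm_num at hz <;> simp [hm]
    exact ⟨k, hk, I, hI, key x hfx, key y hfy⟩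
  refine ⟨E, ?_, ?_, ?_⟩
  · ext x
    rcases hval x with h | h
    · have hx : x ∉ E := by simp [hE, h]
      simp [Set.indicator_apply, hx, h]
    · have hx : x ∈ E := h
      simp [Set.indicator_apply, hx, h]
  · intro x hx x' hfin
    obtain ⟨b, hb⟩ := hfin.bddAbove
    obtain ⟨k, hk, I, hI, h1, h2⟩ := approx (b + 1) x x'
    have hxx' : x k = x' k := by
      by_contra hne
      have := hb hne
      omega
    have : x k ∈ I := h1.mpr hx
    exact h2.mp (hxx' ▸ this)
  · rintro x hx y hy ⟨hW, hfin⟩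
    obtain ⟨b, hb⟩ := hfin.bddAbove
    obtain ⟨k, hk, I, hI, h1, h2⟩ := approx (b + 1) x y
    have hne : x k ≠ y k := by
      intro he
      have := hb he
      omega
    exact hI.2 (x k) (h1.mpr hx) (y k) (h2.mpr hy) hne (hW k)
end

section
/- Assume (†), with witnessing data ⟨n_k⟩, ⟨W_k⟩, X, μ, R. Let 𝓘_k = { I ⊆ n_k : #(I) ≤ k and (i,j) ∉ W_k for all distinct i, j ∈ I }, H_{kI} = { x ∈ X : x(k) ∈ I }, A = { χH_{kI} : k ∈ ℕ, I ∈ 𝓘_k } ⊆ ℝ^X, Z the closure of A in ℝ^X for the topology of pointwise convergence, and A′ = Z \ A. Then for every Radon probability measure ν on A′ (with its subspace topology), the function w(x) = ∫_{A′} u(x) ν(du) vanishes μ-almost everywhere; that is, for every δ > 0 the set { x ∈ X : w(x) ≥ δ } has μ-outer measure zero. -/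
open MeasureTheory
open scoped ENNReal

namespace Stmt9Aux

variable {n : ℕ → ℕ}

/-- A basic cell: the set of points with prescribed coordinates on a finite set. -/
def cell (n : ℕ → ℕ) (s : Finset ℕ) (t : ∀ k, Fin (n k)) : Set (∀ k, Fin (n k)) :=
  {x | ∀ k ∈ s, x k = t k}

lemma measurableSet_cell (s : Finset ℕ) (t : ∀ k, Fin (n k)) :
    MeasurableSet (cell n s t) := by
  have h : cell n s t = ⋂ k ∈ s, (fun x : ∀ k, Fin (n k) => x k) ⁻¹' {t k} := by
    ext x; simp [cell]
  rw [h]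
  exact MeasurableSet.biInter s.countable_toSet
    (fun k _ => (measurable_pi_apply k) (measurableSet_singleton _))

lemma cell_empty (t : ∀ k, Fin (n k)) : cell n (∅ : Finset ℕ) t = Set.univ := by
  ext x; simp [cell]

/-- global extension of a partial point -/
noncomputable def extB (hn : ∀ k, 0 < n k) (s : Finset ℕ) (b : ∀ k : s, Fin (n k)) :
    ∀ k, Fin (n k) :=
  fun k => if h : k ∈ s then b ⟨k, h⟩ else ⟨0, hn k⟩

lemma restrict_eq_cell (hn : ∀ k, 0 < n k) (s : Finset ℕ) (b : ∀ k : s, Fin (n k)) :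
    {x : ∀ k, Fin (n k) | s.restrict x = b} = cell n s (extB hn s b) := by
  ext x
  simp only [Set.mem_setOf_eq, cell, funext_iff, Finset.restrict]
  constructor
  · intro h k hk
    simp [extB, hk, ← h ⟨k, hk⟩]
  · intro h i
    have := h i.1 i.2
    simpa [extB, i.2] using this

/-- Two finite measures agreeing on all cells are equal. -/
lemma ext_cells (hn : ∀ k, 0 < n k) (m₁ m₂ : Measure (∀ k, Fin (n k)))
    [IsFiniteMeasure m₁] [IsFiniteMeasure m₂]
    (h : ∀ (s : Finset ℕ) (t : ∀ k, Fin (n k)), m₁ (cell n s t) = m₂ (cell n s t)) :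
    m₁ = m₂ := by
  classical
  refine ext_of_generate_finite (measurableCylinders (fun k => Fin (n k)))
    generateFrom_measurableCylinders.symm isPiSystem_measurableCylinders ?_ ?_
  · intro S hS
    obtain ⟨s, B, _hB, rfl⟩ := (mem_measurableCylinders S).1 hS
    have hdec : cylinder s B
        = ⋃ b ∈ (Set.toFinite B).toFinset, {x : ∀ k, Fin (n k) | s.restrict x = b} := by
      ext x
      simp only [cylinder, Set.mem_preimage, Set.mem_iUnion, Set.Finite.mem_toFinset,
        Set.mem_setOf_eq, exists_prop]
      constructor
      · intro hx; exact ⟨_, hx, rfl⟩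
      · rintro ⟨b, hb, rfl⟩; exact hb
    have key : ∀ m : Measure (∀ k, Fin (n k)), m (cylinder s B)
        = ∑ b ∈ (Set.toFinite B).toFinset, m {x : ∀ k, Fin (n k) | s.restrict x = b} := by
      intro m
      rw [hdec]
      refine measure_biUnion_finset ?_ ?_
      · intro b _ b' _ hbb'
        refine Set.disjoint_left.2 fun x hx hx' => hbb' ?_
        rw [← hx, ← hx']
      · intro b _
        rw [restrict_eq_cell hn]
        exact measurableSet_cell _ _
    rw [key m₁, key m₂]
    refine Finset.sum_congr rfl fun b _ => ?_
    rw [restrict_eq_cell hn]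
    exact h _ _
  · have := h ∅ (fun k => ⟨0, hn k⟩)
    rwa [cell_empty] at this


lemma meas_cell (μ : Measure (∀ k, Fin (n k)))
    (hcyl : ∀ s : Finset ℕ, ∀ t : ∀ k, Finset (Fin (n k)),
      μ {x | ∀ k ∈ s, x k ∈ t k} = ∏ k ∈ s, ((t k).card : ℝ≥0∞) / (n k : ℝ≥0∞))
    (s : Finset ℕ) (t : ∀ k, Fin (n k)) :
    μ (cell n s t) = ∏ k ∈ s, ((n k : ℝ≥0∞))⁻¹ := by
  have h := hcyl s (fun k => {t k})
  have hset : {x : ∀ k, Fin (n k) | ∀ k ∈ s, x k ∈ ({t k} : Finset (Fin (n k)))}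
      = cell n s t := by
    ext x; simp [cell]
  rw [hset] at h
  rw [h]
  refine Finset.prod_congr rfl fun k _ => by simp [one_div]

/-- the overwrite map -/
def rho (s : Finset ℕ) (t : ∀ k, Fin (n k)) (x : ∀ k, Fin (n k)) : ∀ k, Fin (n k) :=
  fun k => if k ∈ s then t k else x k

lemma measurable_rho (s : Finset ℕ) (t : ∀ k, Fin (n k)) : Measurable (rho s t) := by
  refine measurable_pi_lambda _ fun k => ?_
  by_cases h : k ∈ s <;> simp only [rho, h, if_true, if_false]
  · exact measurable_const
  · exact measurable_pi_apply k

/-- Independence identity: conditioning on a cell. -/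
lemma indep (hn : ∀ k, 0 < n k) (μ : Measure (∀ k, Fin (n k))) [IsProbabilityMeasure μ]
    (hcyl : ∀ s : Finset ℕ, ∀ t : ∀ k, Finset (Fin (n k)),
      μ {x | ∀ k ∈ s, x k ∈ t k} = ∏ k ∈ s, ((t k).card : ℝ≥0∞) / (n k : ℝ≥0∞))
    (s : Finset ℕ) (t : ∀ k, Fin (n k)) (B : Set (∀ k, Fin (n k))) (hB : MeasurableSet B) :
    μ (B ∩ cell n s t) = μ (cell n s t) * μ (rho s t ⁻¹' B) := by
  classical
  have hmap : IsProbabilityMeasure (μ.map (rho s t)) :=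
    Measure.isProbabilityMeasure_map (measurable_rho s t).aemeasurable
  have hfin : IsFiniteMeasure (μ (cell n s t) • μ.map (rho s t)) := by
    constructor
    rw [Measure.smul_apply, smul_eq_mul]
    exact ENNReal.mul_lt_top (measure_lt_top μ _) (by simp [hmap.measure_univ])
  have hres : IsFiniteMeasure (μ.restrict (cell n s t)) := inferInstance
  have hext : μ.restrict (cell n s t) = μ (cell n s t) • μ.map (rho s t) := by
    refine ext_cells hn _ _ ?_
    intro s' t'
    rw [Measure.restrict_apply (measurableSet_cell s' t'), Measure.smul_apply, smul_eq_mul,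
      Measure.map_apply (measurable_rho s t) (measurableSet_cell s' t')]
    by_cases hcompat : ∀ k ∈ s' ∩ s, t' k = t k
    · have h1 : cell n s' t' ∩ cell n s t
          = cell n (s ∪ s') (fun k => if k ∈ s then t k else t' k) := by
        ext x
        simp only [cell, Set.mem_inter_iff, Set.mem_setOf_eq, Finset.mem_union]
        constructor
        · rintro ⟨h', h⟩ k hk
          by_cases hks : k ∈ s
          · simp [hks, h k hks]
          · rcases hk with hk | hk
            · exact absurd hk hks
            · simp [hks, h' k hk]
        · intro h
          constructor
          · intro k hk
            by_cases hks : k ∈ s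
            · have := h k (Or.inl hks)
              simp only [hks, if_true] at this
              rw [this]
              exact (hcompat k (Finset.mem_inter.2 ⟨hk, hks⟩)).symm ▸ rfl
            · have := h k (Or.inr hk)
              simpa [hks] using this
          · intro k hk
            have := h k (Or.inl hk)
            simpa [hk] using this
      have h2 : rho s t ⁻¹' cell n s' t' = cell n (s' \ s) t' := by
        ext x
        simp only [Set.mem_preimage, cell, Set.mem_setOf_eq, rho, Finset.mem_sdiff]
        constructor
        · intro h k hk
          have := h k hk.1
          simpa [hk.2] using this
        · intro h k hk
          by_cases hks : k ∈ s
          · simp only [hks, if_true]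
            exact (hcompat k (Finset.mem_inter.2 ⟨hk, hks⟩)).symm
          · simpa [hks] using h k ⟨hk, hks⟩
      rw [h1, h2, meas_cell μ hcyl, meas_cell μ hcyl, meas_cell μ hcyl]
      rw [← Finset.prod_union (Finset.disjoint_sdiff), Finset.union_sdiff_self_eq_union]
    · push_neg at hcompat
      obtain ⟨k₀, hk₀, hne⟩ := hcompat
      have hk₀s' : k₀ ∈ s' := (Finset.mem_inter.1 hk₀).1
      have hk₀s : k₀ ∈ s := (Finset.mem_inter.1 hk₀).2
      have h1 : cell n s' t' ∩ cell n s t = ∅ := by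
        ext x
        simp only [Set.mem_inter_iff, Set.mem_empty_iff_false, iff_false, cell,
          Set.mem_setOf_eq, not_and]
        intro h' h
        exact hne ((h' k₀ hk₀s').symm.trans (h k₀ hk₀s))
      have h2 : rho s t ⁻¹' cell n s' t' = ∅ := by
        ext x
        simp only [Set.mem_preimage, cell, Set.mem_setOf_eq, Set.mem_empty_iff_false,
          iff_false, not_forall]
        exact ⟨k₀, hk₀s', by simp [rho, hk₀s]; exact fun h => hne h.symm⟩
      rw [h1, h2]
      simp
  have := congrArg (fun m : Measure (∀ k, Fin (n k)) => m B) hext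
  simpa [Measure.restrict_apply hB, Measure.map_apply (measurable_rho s t) hB] using this


/-- Zero-one law for tail-invariant (possibly nonmeasurable) sets: outer measure is 0 or 1. -/
lemma zero_one (hn : ∀ k, 0 < n k) (μ : Measure (∀ k, Fin (n k))) [IsProbabilityMeasure μ]
    (hcyl : ∀ s : Finset ℕ, ∀ t : ∀ k, Finset (Fin (n k)),
      μ {x | ∀ k ∈ s, x k ∈ t k} = ∏ k ∈ s, ((t k).card : ℝ≥0∞) / (n k : ℝ≥0∞))
    (E : Set (∀ k, Fin (n k)))
    (hE : ∀ x ∈ E, ∀ y : ∀ k, Fin (n k), (∃ m, ∀ k, m ≤ k → y k = x k) → y ∈ E) :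
    μ E = 0 ∨ μ E = 1 := by
  classical
  obtain ⟨F, hEF, hFm, hFE⟩ := MeasureTheory.exists_measurable_superset μ E
  set c := μ E with hc
  have hcfin : c ≠ ∞ := (lt_of_le_of_lt (measure_mono (Set.subset_univ E))
    (by simp [measure_lt_top])).ne
  have hge : ∀ (s : Finset ℕ) (t : ∀ k, Fin (n k)),
      c * μ (cell n s t) ≤ μ (F ∩ cell n s t) := by
    intro s t
    have hsub : E ⊆ rho s t ⁻¹' F := by
      intro x hx
      refine hEF (hE x hx (rho s t x) ⟨s.sup id + 1, fun k hk => ?_⟩)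
      have hks : k ∉ s := fun hmem => by
        have : k ≤ s.sup id := Finset.le_sup (f := id) hmem
        omega
      simp [rho, hks]
    have h1 : c ≤ μ (rho s t ⁻¹' F) := hc ▸ measure_mono hsub
    rw [indep hn μ hcyl s t F hFm, mul_comm]
    exact mul_le_mul_right h1 _
  have heq : ∀ (s : Finset ℕ) (t : ∀ k, Fin (n k)),
      μ (F ∩ cell n s t) = c * μ (cell n s t) := by
    intro s t
    set cells : (∀ k : s, Fin (n k)) → Set (∀ k, Fin (n k)) :=
      fun b => cell n s (extB hn s b) with hcells
    have hmem : ∀ x : ∀ k, Fin (n k), x ∈ cells (s.restrict x) := by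
      intro x k hk
      simp [extB, hk, Finset.restrict]
    have hdisj : ∀ b b' : ∀ k : s, Fin (n k), b ≠ b' → Disjoint (cells b) (cells b') := by
      intro b b' hbb'
      refine Set.disjoint_left.2 fun x hx hx' => hbb' (funext fun k => ?_)
      have h1 := hx k.1 k.2
      have h2 := hx' k.1 k.2
      have e1 : extB hn s b k.1 = b k := by simp [extB, k.2]
      have e2 : extB hn s b' k.1 = b' k := by simp [extB, k.2]
      rw [← e1, ← h1, h2, e2]
    have hcover : ∀ G : Set (∀ k, Fin (n k)), MeasurableSet G →
        ∑ b : ∀ k : s, Fin (n k), μ (G ∩ cells b) = μ G := by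
      intro G hG
      have hU : (⋃ b ∈ (Finset.univ : Finset (∀ k : s, Fin (n k))), G ∩ cells b) = G := by
        ext x
        simp only [Set.mem_iUnion, Finset.mem_univ, Set.mem_inter_iff, exists_and_left,
          exists_prop, true_and]
        exact ⟨fun ⟨hx, _⟩ => hx, fun hx => ⟨hx, s.restrict x, hmem x⟩⟩
      calc ∑ b : ∀ k : s, Fin (n k), μ (G ∩ cells b)
          = μ (⋃ b ∈ (Finset.univ : Finset (∀ k : s, Fin (n k))), G ∩ cells b) := by
            refine (measure_biUnion_finset ?_ ?_).symm
            · intro b _ b' _ hbb'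
              exact (hdisj b b' hbb').mono Set.inter_subset_right Set.inter_subset_right
            · exact fun b _ => hG.inter (measurableSet_cell _ _)
      _ = μ G := by rw [hU]
    have hsum1 : ∑ b : ∀ k : s, Fin (n k), μ (F ∩ cells b) = c := by
      rw [hcover F hFm, hFE]
    have hsum2 : ∑ b : ∀ k : s, Fin (n k), c * μ (cells b) = c := by
      rw [← Finset.mul_sum]
      have := hcover Set.univ MeasurableSet.univ
      simp only [Set.univ_inter] at this
      rw [this]
      simp
    have hfin1 : ∀ b : ∀ k : s, Fin (n k), μ (F ∩ cells b) ≠ ∞ :=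
      fun b => (measure_lt_top μ _).ne
    have hfin2 : ∀ b : ∀ k : s, Fin (n k), c * μ (cells b) ≠ ∞ :=
      fun b => (ENNReal.mul_lt_top (hcfin.lt_top) (measure_lt_top μ _)).ne
    have hkey : ∀ b : ∀ k : s, Fin (n k), μ (F ∩ cells b) = c * μ (cells b) := by
      by_contra hcon
      push_neg at hcon
      obtain ⟨b₀, hb₀⟩ := hcon
      have hlt : c * μ (cells b₀) < μ (F ∩ cells b₀) :=
        lt_of_le_of_ne (hge s (extB hn s b₀)) (Ne.symm hb₀)
      have hR : ∑ b : ∀ k : s, Fin (n k), (c * μ (cells b)).toReal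
          < ∑ b : ∀ k : s, Fin (n k), (μ (F ∩ cells b)).toReal := by
        refine Finset.sum_lt_sum (fun b _ => ?_) ⟨b₀, Finset.mem_univ _, ?_⟩
        · exact (ENNReal.toReal_le_toReal (hfin2 b) (hfin1 b)).2 (hge s (extB hn s b))
        · exact (ENNReal.toReal_lt_toReal (hfin2 b₀) (hfin1 b₀)).2 hlt
      rw [← ENNReal.toReal_sum (fun b _ => hfin2 b), ← ENNReal.toReal_sum (fun b _ => hfin1 b),
        hsum1, hsum2] at hR
      exact lt_irrefl _ hR
    have hct : cell n s t = cells (s.restrict t) := by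
      ext x
      simp only [hcells, cell, Set.mem_setOf_eq]
      constructor
      · intro h k hk; rw [h k hk]; simp [extB, hk, Finset.restrict]
      · intro h k hk; rw [h k hk]; simp [extB, hk, Finset.restrict]
    rw [hct]
    exact hkey _
  haveI : IsFiniteMeasure (c • μ) := by
    constructor
    rw [Measure.smul_apply, smul_eq_mul]
    exact ENNReal.mul_lt_top hcfin.lt_top (measure_lt_top μ _)
  have hext : μ.restrict F = c • μ := by
    refine ext_cells hn _ _ fun s t => ?_
    rw [Measure.restrict_apply (measurableSet_cell s t), Set.inter_comm, heq s t,
      Measure.smul_apply, smul_eq_mul]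
  have hFF := congrArg (fun m : Measure (∀ k, Fin (n k)) => m F) hext
  simp only [Measure.restrict_apply hFm, Set.inter_self, Measure.smul_apply, smul_eq_mul,
    hFE] at hFF
  -- hFF : c = c * c
  rcases eq_or_ne c 0 with h0 | h0
  · exact Or.inl h0
  · refine Or.inr ?_
    have : c * 1 = c * c := by rw [mul_one]; exact hFF
    exact ((ENNReal.mul_right_inj h0 hcfin).1 this).symm

end Stmt9Aux

/-- Assume `(†)`, with witnessing data `⟨n_k⟩, ⟨W_k⟩, X = ∏_k n_k, μ` (the product of the
uniform probabilities, characterized here by its values on cylinders) and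
`R = {(x,y) : (x(k),y(k)) ∈ W_k ∀ k, {k : x(k) = y(k)} finite}`.  Let
`𝓘_k = {I ⊆ n_k : #(I) ≤ k, (i,j) ∉ W_k for distinct i,j ∈ I}`, `H_{kI} = {x : x(k) ∈ I}`,
`A = {χH_{kI} : k, I ∈ 𝓘_k}`, `Z` the pointwise closure of `A` in `ℝ^X` and `A' = Z \ A`.
Then for every Radon probability measure `ν` on `A'` (with its subspace topology and Borel
σ-algebra), the function `w(x) = ∫_{A'} u(x) ν(du)` vanishes `μ`-almost everywhere: for every
`δ > 0` the set `{x : w(x) ≥ δ}` has `μ`-outer measure zero. -/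
theorem stmt_9 (n : ℕ → ℕ) (hn : ∀ k, 2 ^ k ≤ n k)
    (W : ∀ k, Finset (Fin (n k) × Fin (n k)))
    (hW : ∀ k, ((W k).card : ℝ) ≤ ((n k : ℝ)) ^ 2 / 2 ^ k)
    (μ : Measure (∀ k, Fin (n k))) (hμ : IsProbabilityMeasure μ)
    (hcyl : ∀ s : Finset ℕ, ∀ t : ∀ k, Finset (Fin (n k)),
      μ {x | ∀ k ∈ s, x k ∈ t k} = ∏ k ∈ s, ((t k).card : ℝ≥0∞) / (n k : ℝ≥0∞))
    (hdag : ∀ D : Set (∀ k, Fin (n k)), μ D = 1 → ∀ r : ℕ,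
      ∃ x : ℕ → ∀ k, Fin (n k), (∀ i ≤ r, x i ∈ D) ∧
        ∀ i j, i < j → j ≤ r →
          ((∀ k, (x j k, x i k) ∈ W k) ∧ {k | x j k = x i k}.Finite))
    (A : Set ((∀ k, Fin (n k)) → ℝ))
    (hA : A = {f | ∃ k : ℕ, ∃ I : Finset (Fin (n k)),
      (I.card ≤ k ∧ ∀ i ∈ I, ∀ j ∈ I, i ≠ j → (i, j) ∉ W k) ∧
      f = Set.indicator {x : ∀ k', Fin (n k') | x k ∈ I} (fun _ => (1 : ℝ))})
    (A' : Set ((∀ k, Fin (n k)) → ℝ)) (hA' : A' = closure A \ A)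
    (ν : @Measure ↥A' (borel ↥A'))
    (hν1 : ν Set.univ = 1)
    (hνRadon : ∀ S : Set ↥A', @MeasurableSet _ (borel ↥A') S →
      ν S = ⨆ (K : Set ↥A') (_ : K ⊆ S) (_ : IsCompact K), ν K) :
    ∀ δ : ℝ, 0 < δ →
      μ {x | δ ≤ ∫ u : ↥A', (u : (∀ k, Fin (n k)) → ℝ) x ∂ν} = 0 := by
  intro δ hδ
  classical
  have hn0 : ∀ k, 0 < n k := fun k => lt_of_lt_of_le (by positivity : 0 < 2 ^ k) (hn k)
  letI : MeasurableSpace ↥A' := borel ↥A'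
  haveI : BorelSpace ↥A' := ⟨rfl⟩
  haveI : IsProbabilityMeasure ν := ⟨hν1⟩
  -- every element of the closure of `A` is `{0,1}`-valued
  have h01 : ∀ u ∈ closure A, ∀ x : ∀ k, Fin (n k), u x = 0 ∨ u x = 1 := by
    intro u hu x
    have hsub : A ⊆ {f : (∀ k, Fin (n k)) → ℝ | f x = 0 ∨ f x = 1} := by
      intro f hf
      rw [hA] at hf
      obtain ⟨k, I, _, rfl⟩ := hf
      by_cases hx : x ∈ {z : ∀ k', Fin (n k') | z k ∈ I}
      · right; simp [Set.indicator_of_mem hx]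
      · left; simp [Set.indicator_of_notMem hx]
    have hcl : IsClosed {f : (∀ k, Fin (n k)) → ℝ | f x = 0 ∨ f x = 1} := by
      have he : {f : (∀ k, Fin (n k)) → ℝ | f x = 0 ∨ f x = 1}
          = (fun f : (∀ k, Fin (n k)) → ℝ => f x) ⁻¹' {0, 1} := by
        ext f; simp [Set.mem_insert_iff]
      rw [he]
      exact ((Set.finite_singleton (1:ℝ)).insert 0).isClosed.preimage (continuous_apply x)
    exact closure_minimal hsub hcl hu
  have h01close : ∀ p q : ℝ, (p = 0 ∨ p = 1) → (q = 0 ∨ q = 1) → |p - q| < 1/2 → p = q := by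
    rintro p q (rfl | rfl) (rfl | rfl) h <;> revert h <;> norm_num
  -- approximation by elements of `A` with arbitrarily large index `k`
  have happrox : ∀ u, u ∈ closure A → u ∉ A → ∀ (m : ℕ) (a b : ∀ k, Fin (n k)),
      ∃ (k : ℕ) (I : Finset (Fin (n k))), m ≤ k ∧
        (I.card ≤ k ∧ ∀ i ∈ I, ∀ j ∈ I, i ≠ j → (i, j) ∉ W k) ∧
        Set.indicator {z : ∀ k', Fin (n k') | z k ∈ I} (fun _ => (1:ℝ)) a = u a ∧
        Set.indicator {z : ∀ k', Fin (n k') | z k ∈ I} (fun _ => (1:ℝ)) b = u b := by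
    intro u hu hnA m a b
    set Am : Set ((∀ k, Fin (n k)) → ℝ) :=
      ⋃ k ∈ Finset.range m, Set.range
        (fun I : Finset (Fin (n k)) =>
          Set.indicator {z : ∀ k', Fin (n k') | z k ∈ I} (fun _ => (1:ℝ))) with hAm
    have hAmfin : Am.Finite :=
      Set.Finite.biUnion (Finset.range m).finite_toSet (fun k _ => Set.finite_range _)
    have hucl : u ∈ closure (A \ Am) := by
      have hsplit : A = (A ∩ Am) ∪ (A \ Am) := (Set.inter_union_diff A Am).symm
      have hu2 : u ∈ closure (A ∩ Am) ∪ closure (A \ Am) := by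
        rw [← closure_union, ← hsplit]; exact hu
      rcases hu2 with h | h
      · exact absurd ((((hAmfin.subset Set.inter_subset_right).isClosed.closure_eq) ▸ h).1) hnA
      · exact h
    set V : Set ((∀ k, Fin (n k)) → ℝ) :=
      {f | |f a - u a| < 1/2 ∧ |f b - u b| < 1/2} with hV
    have hVopen : IsOpen V := by
      have he : V = ((fun f : (∀ k, Fin (n k)) → ℝ => f a) ⁻¹' Metric.ball (u a) (1/2)) ∩
          ((fun f : (∀ k, Fin (n k)) → ℝ => f b) ⁻¹' Metric.ball (u b) (1/2)) := by
        ext f; simp [hV, Metric.mem_ball, Real.dist_eq]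
      rw [he]
      exact ((Metric.isOpen_ball).preimage (continuous_apply a)).inter
        ((Metric.isOpen_ball).preimage (continuous_apply b))
    have huV : u ∈ V := by simp [hV]
    obtain ⟨f, hfV, hfA⟩ := _root_.mem_closure_iff.1 hucl V hVopen huV
    obtain ⟨hfA', hfAm⟩ := hfA
    rw [hA] at hfA'
    obtain ⟨k, I, hI, rfl⟩ := hfA'
    have hkm : m ≤ k := by
      by_contra hk
      push_neg at hk
      exact hfAm (Set.mem_iUnion₂.2 ⟨k, Finset.mem_range.2 hk, ⟨I, rfl⟩⟩)
    have hva : Set.indicator {z : ∀ k', Fin (n k') | z k ∈ I} (fun _ => (1:ℝ)) a = 0 ∨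
        Set.indicator {z : ∀ k', Fin (n k') | z k ∈ I} (fun _ => (1:ℝ)) a = 1 := by
      by_cases hx : a ∈ {z : ∀ k', Fin (n k') | z k ∈ I}
      · right; simp [Set.indicator_of_mem hx]
      · left; simp [Set.indicator_of_notMem hx]
    have hvb : Set.indicator {z : ∀ k', Fin (n k') | z k ∈ I} (fun _ => (1:ℝ)) b = 0 ∨
        Set.indicator {z : ∀ k', Fin (n k') | z k ∈ I} (fun _ => (1:ℝ)) b = 1 := by
      by_cases hx : b ∈ {z : ∀ k', Fin (n k') | z k ∈ I}
      · right; simp [Set.indicator_of_mem hx]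
      · left; simp [Set.indicator_of_notMem hx]
    exact ⟨k, I, hkm, hI,
      h01close _ _ hva (h01 u hu a) hfV.1,
      h01close _ _ hvb (h01 u hu b) hfV.2⟩
  -- the chain lemma
  have hchain : ∀ u, u ∈ closure A → u ∉ A → ∀ a b : ∀ k, Fin (n k),
      (∀ k, (b k, a k) ∈ W k) → {k | b k = a k}.Finite → ¬(u a = 1 ∧ u b = 1) := by
    rintro u hu hnA a b hrel hfin ⟨ha1, hb1⟩
    obtain ⟨M, hM⟩ := hfin.bddAbove
    obtain ⟨k, I, hkm, ⟨_, hind⟩, hxa, hxb⟩ := happrox u hu hnA (M + 1) a b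
    have hne : b k ≠ a k := by
      intro he
      have hkM : k ≤ M := hM (show k ∈ {k | b k = a k} from he)
      omega
    have haI : a k ∈ I := by
      by_contra hI'
      rw [Set.indicator_of_notMem (show a ∉ {z : ∀ k', Fin (n k') | z k ∈ I} from hI'), ha1]
        at hxa
      norm_num at hxa
    have hbI : b k ∈ I := by
      by_contra hI'
      rw [Set.indicator_of_notMem (show b ∉ {z : ∀ k', Fin (n k') | z k ∈ I} from hI'), hb1]
        at hxb
      norm_num at hxb
    exact hind (b k) hbI (a k) haI hne (hrel k)
  have hcoe : ∀ u : ↥A', (u : (∀ k, Fin (n k)) → ℝ) ∈ closure A ∧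
      (u : (∀ k, Fin (n k)) → ℝ) ∉ A := by
    rintro ⟨uf, huf⟩
    rw [hA'] at huf
    exact ⟨huf.1, huf.2⟩
  -- tail invariance of w
  have hwtail : ∀ x y : ∀ k, Fin (n k), (∃ m, ∀ k, m ≤ k → y k = x k) →
      (∫ u : ↥A', (u : (∀ k, Fin (n k)) → ℝ) x ∂ν)
        = ∫ u : ↥A', (u : (∀ k, Fin (n k)) → ℝ) y ∂ν := by
    rintro x y ⟨m, hm⟩
    refine integral_congr_ae (Filter.Eventually.of_forall fun u => ?_)
    obtain ⟨k, I, hkm, _, hx, hy⟩ := happrox u (hcoe u).1 (hcoe u).2 m x y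
    show (u : (∀ k, Fin (n k)) → ℝ) x = (u : (∀ k, Fin (n k)) → ℝ) y
    rw [← hx, ← hy]
    have hxy : x k = y k := (hm k hkm).symm
    by_cases hxk : x k ∈ I
    · rw [Set.indicator_of_mem (show x ∈ {z : ∀ k', Fin (n k') | z k ∈ I} from hxk),
        Set.indicator_of_mem (show y ∈ {z : ∀ k', Fin (n k') | z k ∈ I} from by
          show y k ∈ I; rw [← hxy]; exact hxk)]
    · rw [Set.indicator_of_notMem (show x ∉ {z : ∀ k', Fin (n k') | z k ∈ I} from hxk),
        Set.indicator_of_notMem (show y ∉ {z : ∀ k', Fin (n k') | z k ∈ I} from by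
          show ¬ y k ∈ I; rw [← hxy]; exact hxk)]
  set E := {x : ∀ k, Fin (n k) | δ ≤ ∫ u : ↥A', (u : (∀ k, Fin (n k)) → ℝ) x ∂ν} with hEdef
  have hEinv : ∀ x ∈ E, ∀ y : ∀ k, Fin (n k), (∃ m, ∀ k, m ≤ k → y k = x k) → y ∈ E := by
    intro x hx y hm
    have hxy := hwtail x y hm
    simp only [hEdef, Set.mem_setOf_eq] at hx ⊢
    rw [← hxy]; exact hx
  rcases Stmt9Aux.zero_one hn0 μ hcyl E hEinv with h0 | h1
  · exact h0
  · exfalso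
    have hcont : ∀ x : ∀ k, Fin (n k),
        Continuous (fun u : ↥A' => (u : (∀ k, Fin (n k)) → ℝ) x) :=
      fun x => (continuous_apply x).comp continuous_subtype_val
    have hint : ∀ x : ∀ k, Fin (n k),
        Integrable (fun u : ↥A' => (u : (∀ k, Fin (n k)) → ℝ) x) ν := by
      intro x
      refine (integrable_const (1:ℝ)).mono' ((hcont x).measurable.aestronglyMeasurable) ?_
      refine Filter.Eventually.of_forall fun u => ?_
      rcases h01 u (hcoe u).1 x with h | h <;> rw [h] <;> norm_num
    set r := Nat.ceil (1/δ) with hr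
    obtain ⟨x, hxE, hrel⟩ := hdag E h1 r
    have hsum_le : ∀ u : ↥A',
        ∑ i ∈ Finset.range (r+1), (u : (∀ k, Fin (n k)) → ℝ) (x i) ≤ 1 := by
      intro u
      by_cases hex : ∃ i ∈ Finset.range (r+1), (u : (∀ k, Fin (n k)) → ℝ) (x i) = 1
      · obtain ⟨i₀, hi₀, hone⟩ := hex
        have hz : ∀ j ∈ Finset.range (r+1), j ≠ i₀ →
            (u : (∀ k, Fin (n k)) → ℝ) (x j) = 0 := by
          intro j hj hji
          rcases h01 u (hcoe u).1 (x j) with h | h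
          · exact h
          · exfalso
            rcases Nat.lt_or_ge j i₀ with hlt | hge
            · have hp := hrel j i₀ hlt (Nat.lt_succ_iff.1 (Finset.mem_range.1 hi₀))
              exact hchain u (hcoe u).1 (hcoe u).2 (x j) (x i₀) hp.1 hp.2 ⟨h, hone⟩
            · have hlt' : i₀ < j := lt_of_le_of_ne hge (fun e => hji e.symm)
              have hp := hrel i₀ j hlt' (Nat.lt_succ_iff.1 (Finset.mem_range.1 hj))
              exact hchain u (hcoe u).1 (hcoe u).2 (x i₀) (x j) hp.1 hp.2 ⟨hone, h⟩
        rw [Finset.sum_eq_single i₀ hz (fun h => absurd hi₀ h), hone]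
      · push_neg at hex
        have hz : ∀ i ∈ Finset.range (r+1), (u : (∀ k, Fin (n k)) → ℝ) (x i) = 0 := by
          intro i hi
          rcases h01 u (hcoe u).1 (x i) with h | h
          · exact h
          · exact absurd h (hex i hi)
        rw [Finset.sum_eq_zero hz]; norm_num
    have h1' : ∑ i ∈ Finset.range (r+1),
        (∫ u : ↥A', (u : (∀ k, Fin (n k)) → ℝ) (x i) ∂ν) ≤ 1 := by
      rw [← integral_finset_sum _ (fun i _ => hint (x i))]
      have hmono := integral_mono (integrable_finset_sum _ (fun i _ => hint (x i)))
        (integrable_const (1:ℝ)) hsum_le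
      simpa [integral_const, measure_univ] using hmono
    have h2' : ((r:ℝ)+1) * δ ≤ ∑ i ∈ Finset.range (r+1),
        (∫ u : ↥A', (u : (∀ k, Fin (n k)) → ℝ) (x i) ∂ν) := by
      have hle := Finset.sum_le_sum (f := fun _ : ℕ => δ)
        (g := fun i => ∫ u : ↥A', (u : (∀ k, Fin (n k)) → ℝ) (x i) ∂ν)
        (s := Finset.range (r+1))
        (fun i hi => hxE i (Nat.lt_succ_iff.1 (Finset.mem_range.1 hi)))
      have hc : ∑ _i ∈ Finset.range (r+1), δ = ((r:ℝ)+1) * δ := by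
        rw [Finset.sum_const, Finset.card_range, nsmul_eq_mul]
        push_cast
        ring
      rw [← hc]
      exact hle
    have h3' : (1:ℝ) < ((r:ℝ)+1) * δ := by
      have hceil : (1/δ : ℝ) ≤ (r:ℝ) := Nat.le_ceil _
      have h4 : (1:ℝ) = (1/δ) * δ := by field_simp
      nlinarith
    linarith
end

section
/- Let ⟨n_k⟩_{k∈ℕ} be integers with n_k ≥ 2^k and W_k ⊆ n_k × n_k for each k. Let X = ∏_{k∈ℕ} n_k with the product measure μ of the uniform probabilities, 𝓘_k = { I ⊆ n_k : #(I) ≤ k and (i,j) ∉ W_k for all distinct i, j ∈ I }, H_{kI} = { x ∈ X : x(k) ∈ I }, A = { χH_{kI} : k ∈ ℕ, I ∈ 𝓘_k } ⊆ ℝ^X, and Z the closure of A in ℝ^X for the topology of pointwise convergence. For each μ-measurable set E ⊆ X define f_E : Z → ℝ by f_E(h) = ∫_E h dμ for h ∈ A and f_E(u) = 0 for u ∈ Z \ A. Then f_E is continuous on Z. -/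
open MeasureTheory
open scoped ENNReal Classical

/-- Let `⟨n_k⟩` be integers with `n_k ≥ 2^k`, `W_k ⊆ n_k × n_k`, `X = ∏_k n_k` with the product
measure `μ` of the uniform probabilities (characterized by its values on cylinders),
`𝓘_k = {I ⊆ n_k : #(I) ≤ k, (i,j) ∉ W_k for distinct i,j ∈ I}`, `H_{kI} = {x : x(k) ∈ I}`,
`A = {χH_{kI} : k, I ∈ 𝓘_k}` and `Z` the pointwise closure of `A` in `ℝ^X`.  For a
`μ`-measurable set `E ⊆ X` define `f_E : Z → ℝ` by `f_E(h) = ∫_E h dμ` for `h ∈ A` and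
`f_E(u) = 0` for `u ∈ Z \ A`.  Then `f_E` is continuous on `Z`. -/
theorem stmt_10 (n : ℕ → ℕ) (hn : ∀ k, 2 ^ k ≤ n k)
    (W : ∀ k, Finset (Fin (n k) × Fin (n k)))
    (μ : Measure (∀ k, Fin (n k))) (hμ : IsProbabilityMeasure μ)
    (hcyl : ∀ s : Finset ℕ, ∀ t : ∀ k, Finset (Fin (n k)),
      μ {x | ∀ k ∈ s, x k ∈ t k} = ∏ k ∈ s, ((t k).card : ℝ≥0∞) / (n k : ℝ≥0∞))
    (A : Set ((∀ k, Fin (n k)) → ℝ))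
    (hA : A = {f | ∃ k : ℕ, ∃ I : Finset (Fin (n k)),
      (I.card ≤ k ∧ ∀ i ∈ I, ∀ j ∈ I, i ≠ j → (i, j) ∉ W k) ∧
      f = Set.indicator {x : ∀ k', Fin (n k') | x k ∈ I} (fun _ => (1 : ℝ))})
    (E : Set (∀ k, Fin (n k))) (hE : NullMeasurableSet E μ)
    (fE : ((∀ k, Fin (n k)) → ℝ) → ℝ)
    (hfE : fE = fun u => if u ∈ A then ∫ x in E, u x ∂μ else 0) :
    ContinuousOn fE (closure A) := by
  have hnk0 : ∀ k', 0 < n k' := fun k' => lt_of_lt_of_le (pow_pos (by norm_num) k') (hn k')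
  haveI := hμ
  -- measure of a basic set
  have hmeasH : ∀ (k : ℕ) (I : Finset (Fin (n k))),
      MeasurableSet {x : ∀ k', Fin (n k') | x k ∈ I} := by
    intro k I
    exact measurable_pi_apply k (Set.toFinite (↑I : Set (Fin (n k)))).measurableSet
  have hμH : ∀ (k : ℕ) (I : Finset (Fin (n k))),
      μ {x : ∀ k', Fin (n k') | x k ∈ I} = (I.card : ℝ≥0∞) / (n k : ℝ≥0∞) := by
    intro k I
    have := hcyl {k} (Function.update (fun k' => (Finset.univ : Finset (Fin (n k')))) k I)
    simpa [Function.update_self] using this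
  intro u hu
  by_cases hpos : ∃ k : ℕ, ∃ I : Finset (Fin (n k)),
      I.Nonempty ∧ (I.card ≤ k ∧ ∀ i ∈ I, ∀ j ∈ I, i ≠ j → (i, j) ∉ W k) ∧
      u = Set.indicator {x : ∀ k', Fin (n k') | x k ∈ I} (fun _ => (1 : ℝ))
  · -- `u` is an isolated point of `closure A`
    obtain ⟨k, I, hIne, hcond, huEq⟩ := hpos
    have huA : u ∈ A := by rw [hA]; exact ⟨k, I, hcond, huEq⟩
    set x0 : ∀ k', Fin (n k') := fun k' => ⟨0, hnk0 k'⟩ with hx0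
    set xp : Fin (n k) → ∀ k', Fin (n k') := fun i => Function.update x0 k i with hxp
    have hxpk : ∀ i, xp i k = i := fun i => by simp [hxp]
    have huval : ∀ i : Fin (n k), u (xp i) = if i ∈ I then 1 else 0 := by
      intro i
      rw [huEq]
      simp [Set.indicator_apply, hxpk i]
    set U : Set ((∀ k', Fin (n k')) → ℝ) :=
      ⋂ i : Fin (n k), (fun v : (∀ k', Fin (n k')) → ℝ => v (xp i)) ⁻¹'
        Metric.ball (u (xp i)) (1/2) with hU
    have hUopen : IsOpen U :=
      isOpen_iInter_of_finite fun i =>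
        (Metric.isOpen_ball).preimage (continuous_apply (xp i))
    have huU : u ∈ U := by
      simp only [hU, Set.mem_iInter, Set.mem_preimage, Metric.mem_ball]
      intro i; simp
    have hAU : A ∩ U ⊆ {u} := by
      rintro v ⟨hvA, hvU⟩
      simp only [hU, Set.mem_iInter, Set.mem_preimage, Metric.mem_ball] at hvU
      rw [hA] at hvA
      obtain ⟨k', I', hc', hveq⟩ := hvA
      by_cases hkk : k' = k
      · subst hkk
        have hI : I' = I := by
          ext i
          have := hvU i
          rw [hveq, huval i] at this
          simp only [Set.indicator_apply, Set.mem_setOf_eq, hxpk i] at this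
          by_cases h1 : i ∈ I' <;> by_cases h2 : i ∈ I <;>
            simp [h1, h2, Real.dist_eq] at this ⊢ <;> linarith
        rw [hveq, hI, ← huEq]; rfl
      · exfalso
        obtain ⟨i0, hi0⟩ := hIne
        have hIcard : I.card < n k := by
          calc I.card ≤ k := hcond.1
            _ < 2 ^ k := Nat.lt_two_pow_self
            _ ≤ n k := hn k
        have : ∃ j0, j0 ∉ I := by
          by_contra hcon
          push_neg at hcon
          have : I = Finset.univ := Finset.eq_univ_iff_forall.2 hcon
          rw [this, Finset.card_univ, Fintype.card_fin] at hIcard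
          exact lt_irrefl _ hIcard
        obtain ⟨j0, hj0⟩ := this
        have hconst : ∀ i : Fin (n k), (xp i) k' = x0 k' := fun i => by
          simp [hxp, Function.update_of_ne hkk]
        have hveqv : v (xp i0) = v (xp j0) := by
          rw [hveq]
          simp only [Set.indicator_apply, Set.mem_setOf_eq, hconst i0, hconst j0]
        have h1 := hvU i0
        have h2 := hvU j0
        rw [huval i0, if_pos hi0] at h1
        rw [huval j0, if_neg hj0] at h2
        rw [Real.dist_eq, abs_lt] at h1 h2
        rw [hveqv] at h1
        linarith [h1.1, h1.2, h2.1, h2.2]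
    have hev : ∀ᶠ v in nhdsWithin u (closure A), fE v = fE u := by
      filter_upwards [mem_nhdsWithin_of_mem_nhds (hUopen.mem_nhds huU),
        self_mem_nhdsWithin] with v hvU hvcl
      have : v ∈ closure (U ∩ A) := hUopen.inter_closure ⟨hvU, hvcl⟩
      have hsub : closure (U ∩ A) ⊆ {u} := by
        rw [← closure_singleton (x := u)]
        exact closure_mono fun w hw => hAU ⟨hw.2, hw.1⟩
      have := hsub this
      simp only [Set.mem_singleton_iff] at this
      rw [this]
    exact (continuousWithinAt_const :
      ContinuousWithinAt (fun _ => fE u) (closure A) u).congr_of_eventuallyEq hev rfl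
  · -- `fE u = 0` and `fE` tends to `0` near `u` within `closure A`
    have hfEu : fE u = 0 := by
      by_cases huA : u ∈ A
      · simp only [hfE, if_pos huA]
        rw [hA] at huA
        obtain ⟨k, I, hc, hueq⟩ := huA
        have hIemp : I = ∅ := by
          by_contra hne
          exact hpos ⟨k, I, Finset.nonempty_iff_ne_empty.2 hne, hc, hueq⟩
        subst hIemp
        rw [hueq]
        simp
      · simp only [hfE, if_neg huA]
    rw [ContinuousWithinAt, hfEu]
    rw [NormedAddCommGroup.tendsto_nhds_zero]
    intro ε hε
    have htend : Filter.Tendsto (fun k : ℕ => (k : ℝ) / 2 ^ k) Filter.atTop (nhds 0) := by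
      have h := tendsto_self_mul_const_pow_of_lt_one (r := (1/2 : ℝ)) (by norm_num) (by norm_num)
      have heq : (fun n : ℕ => (n : ℝ) * (1/2) ^ n) = fun n : ℕ => (n : ℝ) / 2 ^ n := by
        funext m
        rw [one_div, inv_pow, div_eq_mul_inv]
      rwa [heq] at h
    obtain ⟨K, hK⟩ := Filter.eventually_atTop.1 (htend.eventually (gt_mem_nhds hε))
    set S : Set ((∀ k', Fin (n k')) → ℝ) :=
      ⋃ k ∈ Set.Iic K, Set.range (fun I : Finset (Fin (n k)) =>
        Set.indicator {x : ∀ k', Fin (n k') | x k ∈ I} (fun _ => (1 : ℝ))) with hS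
    have hSfin : S.Finite :=
      Set.Finite.biUnion (Set.finite_Iic K) fun k _ => Set.finite_range _
    have hVopen : IsOpen (S \ {u})ᶜ :=
      ((hSfin.subset Set.diff_subset).isClosed).isOpen_compl
    have huV : u ∈ (S \ {u})ᶜ := by simp
    filter_upwards [mem_nhdsWithin_of_mem_nhds (hVopen.mem_nhds huV)] with v hvV
    by_cases hvu : v = u
    · rw [hvu, hfEu]; simpa using hε
    by_cases hvA : v ∈ A
    · have hvS : v ∉ S := fun hvS => hvV ⟨hvS, hvu⟩
      rw [hA] at hvA
      obtain ⟨k, I, ⟨hIc, hIW⟩, hveq⟩ := hvA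
      have hKk : K ≤ k := by
        by_contra hlt
        push_neg at hlt
        exact hvS (Set.mem_biUnion (Set.mem_Iic.2 hlt.le) ⟨I, hveq.symm⟩)
      have hvA' : v ∈ A := by rw [hA]; exact ⟨k, I, ⟨hIc, hIW⟩, hveq⟩
      simp only [hfE, if_pos hvA']
      rw [hveq]
      have hcalc : ∫ x in E, Set.indicator {x : ∀ k', Fin (n k') | x k ∈ I}
          (fun _ => (1 : ℝ)) x ∂μ
          = (μ.restrict E {x : ∀ k', Fin (n k') | x k ∈ I}).toReal := by
        have h1 := integral_indicator_one (μ := μ.restrict E) (hmeasH k I)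
        simpa [Pi.one_def, measureReal_def] using h1
      rw [hcalc, Measure.restrict_apply (hmeasH k I)]
      have hb1 : (μ ({x : ∀ k', Fin (n k') | x k ∈ I} ∩ E)).toReal
          ≤ (μ {x : ∀ k', Fin (n k') | x k ∈ I}).toReal :=
        ENNReal.toReal_mono (measure_ne_top μ _) (measure_mono Set.inter_subset_left)
      have hb2 : (μ {x : ∀ k', Fin (n k') | x k ∈ I}).toReal = (I.card : ℝ) / (n k : ℝ) := by
        rw [hμH k I, ENNReal.toReal_div]
        simp
      have hb3 : (I.card : ℝ) / (n k : ℝ) ≤ (k : ℝ) / 2 ^ k := by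
        apply div_le_div₀ (by positivity) (by exact_mod_cast hIc)
          (by positivity) (by exact_mod_cast hn k)
      have hnn : (0:ℝ) ≤ (μ ({x : ∀ k', Fin (n k') | x k ∈ I} ∩ E)).toReal :=
        ENNReal.toReal_nonneg
      rw [Real.norm_eq_abs, abs_of_nonneg hnn]
      calc (μ ({x : ∀ k', Fin (n k') | x k ∈ I} ∩ E)).toReal
          ≤ (I.card : ℝ) / (n k : ℝ) := hb2 ▸ hb1
        _ ≤ (k : ℝ) / 2 ^ k := hb3
        _ < ε := hK k hKk
    · simp only [hfE, if_neg hvA]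
      simpa using hε
end

section
/- Suppose there is a closed set Q ⊆ [0,1]² which is negligible for two-dimensional Lebesgue measure and such that whenever D ⊆ [0,1] has Lebesgue outer measure 1, the set Q^{-1}[D] = { x ∈ [0,1] : there is y ∈ D with (x,y) ∈ Q } has Lebesgue inner measure 1. Then there is a set Q′ ⊆ [0,1]², negligible for two-dimensional Lebesgue measure, such that whenever C, D ⊆ [0,1] and (C × D) ∩ Q′ = ∅, at least one of C, D has Lebesgue outer measure zero. -/
open MeasureTheory
open scoped ENNReal

/-- The Lebesgue *inner measure* of a set `S ⊆ ℝ`: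
`sup { μ_L K : K ⊆ S, K Lebesgue measurable }`. -/
noncomputable def innerMeasure (S : Set ℝ) : ℝ≥0∞ :=
  ⨆ (K : Set ℝ) (_ : K ⊆ S) (_ : MeasurableSet K), volume K

open Set Metric

section AuxLemmas

lemma density_lb {S : Set ℝ} {z : ℝ}
    (h : Filter.Tendsto (fun r => volume (S ∩ closedBall z r) / volume (closedBall z r))
      (nhdsWithin 0 (Set.Ioi 0)) (nhds 1)) :
    ∀ᶠ r in nhdsWithin (0:ℝ) (Set.Ioi 0),
      ENNReal.ofReal (9/5 * r) ≤ volume (S ∩ closedBall z r) := by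
  have h9 : (ENNReal.ofReal (9/10) : ℝ≥0∞) < 1 := ENNReal.ofReal_lt_one.2 (by norm_num)
  filter_upwards [h.eventually (eventually_gt_nhds h9), self_mem_nhdsWithin] with r hr hrpos
  have hrpos : (0:ℝ) < r := hrpos
  have hball : volume (closedBall z r) = ENNReal.ofReal (2 * r) := Real.volume_closedBall z r
  have hb0 : volume (closedBall z r) ≠ 0 := by
    rw [hball]; simp only [ne_eq, ENNReal.ofReal_eq_zero, not_le]; linarith
  have hbt : volume (closedBall z r) ≠ ⊤ := by rw [hball]; exact ENNReal.ofReal_ne_top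
  have := (ENNReal.lt_div_iff_mul_lt (Or.inl hb0) (Or.inl hbt)).1 hr
  calc ENNReal.ofReal (9/5 * r) = ENNReal.ofReal (9/10) * volume (closedBall z r) := by
        rw [hball, ← ENNReal.ofReal_mul (by norm_num)]; ring_nf
    _ ≤ volume (S ∩ closedBall z r) := this.le

lemma rat_translates_conull {H : Set ℝ} (hm : MeasurableSet H) (h0 : volume H ≠ 0) :
    volume ((⋃ q : ℚ, (fun t : ℝ => t + (q : ℝ)) '' H)ᶜ) = 0 := by
  set V : Set ℝ := ⋃ q : ℚ, (fun t : ℝ => t + (q : ℝ)) '' H with hV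
  have hVm : MeasurableSet V := by
    refine MeasurableSet.iUnion fun q => ?_
    rw [show (fun t : ℝ => t + (q:ℝ)) '' H = (fun t : ℝ => t + -(q:ℝ)) ⁻¹' H from
      Set.image_add_right]
    exact hm.preimage (measurable_add_const _)
  by_contra hN
  have hVne : volume V ≠ 0 := by
    intro h
    exact h0 (measure_mono_null (by
      intro t ht; exact Set.mem_iUnion.2 ⟨0, ⟨t, ht, by simp⟩⟩) h)
  have hdV := Besicovitch.ae_tendsto_measure_inter_div (volume : Measure ℝ) V
  have hdN := Besicovitch.ae_tendsto_measure_inter_div (volume : Measure ℝ) Vᶜ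
  have hVres : (volume : Measure ℝ).restrict V ≠ 0 := by
    simpa [Measure.restrict_eq_zero] using hVne
  have hNres : (volume : Measure ℝ).restrict Vᶜ ≠ 0 := by
    simpa [Measure.restrict_eq_zero] using hN
  obtain ⟨x, hx⟩ := (@Filter.Eventually.exists _ _ _ (ae_neBot.2 hVres) hdV)
  obtain ⟨y, hy⟩ := (@Filter.Eventually.exists _ _ _ (ae_neBot.2 hNres) hdN)
  obtain ⟨r, hxr, hyr, hrpos⟩ :=
    ((density_lb hx).and ((density_lb hy).and self_mem_nhdsWithin)).exists
  have hrpos : (0:ℝ) < r := hrpos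
  -- choose a rational q close to y - x
  obtain ⟨q, hq⟩ := exists_rat_near (y - x) (show (0:ℝ) < r/10 by linarith)
  -- translate the ball at x to the ball at y
  set W : Set ℝ := (fun t : ℝ => t + (q : ℝ)) '' (V ∩ closedBall x r) with hW
  have hWpre : W = (fun t : ℝ => t + -(q:ℝ)) ⁻¹' (V ∩ closedBall x r) := Set.image_add_right
  have hWm : MeasurableSet W := by
    rw [hWpre]; exact (hVm.inter measurableSet_closedBall).preimage (measurable_add_const _)
  have hWvol : volume W = volume (V ∩ closedBall x r) := by
    rw [hWpre]; exact measure_preimage_add_right volume _ _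
  have hWV : W ⊆ V := by
    rintro _ ⟨t, ⟨htV, -⟩, rfl⟩
    obtain ⟨q', ⟨s, hs, rfl⟩⟩ := Set.mem_iUnion.1 htV
    exact Set.mem_iUnion.2 ⟨q' + q, ⟨s, hs, by push_cast; ring⟩⟩
  have hWb : W ⊆ closedBall y (11/10 * r) := by
    rintro _ ⟨t, ⟨-, htb⟩, rfl⟩
    rw [mem_closedBall, Real.dist_eq] at htb ⊢
    obtain ⟨h1, h2⟩ := abs_sub_le_iff.1 htb
    obtain ⟨h3, h4⟩ := abs_sub_lt_iff.1 hq
    rw [abs_sub_le_iff]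
    constructor <;> linarith
  have hNb : Vᶜ ∩ closedBall y r ⊆ closedBall y (11/10 * r) := by
    rintro t ⟨-, htb⟩
    exact closedBall_subset_closedBall (by linarith) htb
  have hdisj : Disjoint W (Vᶜ ∩ closedBall y r) := by
    rw [Set.disjoint_left]
    rintro t htW ⟨htN, -⟩
    exact htN (hWV htW)
  have hsum : volume W + volume (Vᶜ ∩ closedBall y r) ≤ ENNReal.ofReal (2 * (11/10 * r)) := by
    rw [← measure_union hdisj ((hVm.compl).inter measurableSet_closedBall)]
    rw [← Real.volume_closedBall y (11/10 * r)]
    exact measure_mono (Set.union_subset hWb hNb)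
  have hlb : ENNReal.ofReal (9/5 * r) + ENNReal.ofReal (9/5 * r)
      ≤ volume W + volume (Vᶜ ∩ closedBall y r) := by
    rw [hWvol]; exact add_le_add hxr hyr
  rw [← ENNReal.ofReal_add (by linarith) (by linarith)] at hlb
  have := ENNReal.ofReal_le_ofReal_iff (by linarith) |>.1 (hlb.trans hsum)
  linarith

end AuxLemmas

/-- **2G, (‡) ⇒ (‡)′.**  Suppose there is a closed set `Q ⊆ [0,1]²`, negligible for
two-dimensional Lebesgue measure, such that whenever `D ⊆ [0,1]` has Lebesgue outer measure `1`
then `Q⁻¹[D] = { x : ∃ y ∈ D, (x,y) ∈ Q }` has Lebesgue inner measure `1`.  Then there is a set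
`Q′ ⊆ [0,1]²`, negligible for two-dimensional Lebesgue measure, such that whenever
`C, D ⊆ [0,1]` and `(C × D) ∩ Q′ = ∅`, at least one of `C`, `D` has Lebesgue outer measure
zero. -/
theorem stmt_18 (Q : Set (ℝ × ℝ))
    (hQsub : Q ⊆ Set.Icc (0 : ℝ) 1 ×ˢ Set.Icc (0 : ℝ) 1)
    (hQclosed : IsClosed Q)
    (hQnull : volume Q = 0)
    (hQ : ∀ D : Set ℝ, D ⊆ Set.Icc (0 : ℝ) 1 → volume D = 1 →
      innerMeasure {x : ℝ | ∃ y ∈ D, (x, y) ∈ Q} = 1) :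
    ∃ Q' : Set (ℝ × ℝ),
      Q' ⊆ Set.Icc (0 : ℝ) 1 ×ˢ Set.Icc (0 : ℝ) 1 ∧
      volume Q' = 0 ∧
      ∀ C D : Set ℝ, C ⊆ Set.Icc (0 : ℝ) 1 → D ⊆ Set.Icc (0 : ℝ) 1 →
        (C ×ˢ D) ∩ Q' = ∅ → volume C = 0 ∨ volume D = 0 := by
  classical
  set I : Set ℝ := Set.Icc (0:ℝ) 1 with hI
  have hIvol : volume I = 1 := by rw [hI, Real.volume_Icc]; norm_num
  refine ⟨(I ×ˢ I) ∩ {p : ℝ × ℝ | ∃ q : ℚ, (p.1, p.2 + (q:ℝ)) ∈ Q}, inter_subset_left, ?_, ?_⟩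
  · -- Q' is null
    refine measure_mono_null (t := ⋃ q : ℚ, (fun p : ℝ × ℝ => (p.1, p.2 + (q:ℝ))) ⁻¹' Q) ?_ ?_
    · rintro p ⟨-, q, hq⟩; exact Set.mem_iUnion.2 ⟨q, hq⟩
    · refine measure_iUnion_null fun q => ?_
      have hmp : MeasurePreserving (fun p : ℝ × ℝ => (p.1, p.2 + (q:ℝ))) volume volume := by
        rw [Measure.volume_eq_prod ℝ ℝ]
        exact (MeasurePreserving.id _).prod (measurePreserving_add_right volume (q:ℝ))
      rw [hmp.measure_preimage hQclosed.measurableSet.nullMeasurableSet]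
      exact hQnull
  · rintro C D hCI hDI hdisj
    by_contra hcon
    push_neg at hcon
    obtain ⟨hC0, hD0⟩ := hcon
    -- the enlarged set D~
    set Dt : Set ℝ := I ∩ ⋃ q : ℚ, (fun t : ℝ => t + (q:ℝ)) '' D with hDt
    have hDtI : Dt ⊆ I := inter_subset_left
    have hDtvol : volume Dt = 1 := by
      refine le_antisymm (hIvol ▸ measure_mono hDtI) ?_
      by_contra hlt
      push_neg at hlt
      set T : Set ℝ := toMeasurable volume Dt with hT
      have hTm : MeasurableSet T := measurableSet_toMeasurable _ _
      have hTvol : volume T < 1 := by rwa [hT, measure_toMeasurable]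
      set H : Set ℝ := I \ T with hH
      have hHm : MeasurableSet H := measurableSet_Icc.diff hTm
      have hH0 : volume H ≠ 0 := by
        intro h
        have : volume I ≤ volume H + volume T :=
          (measure_mono (by intro t ht; by_cases h' : t ∈ T <;> [exact Or.inr h'; exact Or.inl ⟨ht, h'⟩] :
            I ⊆ H ∪ T)).trans (measure_union_le _ _)
        rw [hIvol, h, zero_add] at this
        exact absurd this (not_le.2 hTvol)
      -- D avoids every rational translate of H
      have hDsub : D ⊆ (⋃ q : ℚ, (fun t : ℝ => t + (q:ℝ)) '' H)ᶜ := by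
        rintro d hd ⟨_, ⟨q, rfl⟩, ⟨h, hhH, hEq⟩⟩
        -- d = h + q, so h = d + (-q) ∈ Dt ⊆ T, contradiction with h ∈ I \ T
        apply hhH.2
        apply subset_toMeasurable volume Dt
        have hEq' : h + (q:ℝ) = d := hEq
        refine ⟨hhH.1 , Set.mem_iUnion.2 ⟨-q, ⟨d, hd, ?_⟩⟩⟩
        show d + ((-q : ℚ):ℝ) = h
        push_cast
        linarith
      have := measure_mono_null hDsub (rat_translates_conull hHm hH0)
      exact hD0 this
    -- apply the hypothesis
    set A : Set ℝ := {x : ℝ | ∃ y ∈ Dt, (x, y) ∈ Q} with hAdef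
    have hA : innerMeasure A = 1 := hQ Dt hDtI hDtvol
    have hAI : A ⊆ I := by rintro x ⟨y, -, hxy⟩; exact (hQsub hxy).1
    have hC1 : volume C ≤ 1 := hIvol ▸ measure_mono hCI
    have hCltself : (1:ℝ≥0∞) - volume C < innerMeasure A := by
      rw [hA]; exact ENNReal.sub_lt_self ENNReal.one_ne_top one_ne_zero hC0
    rw [innerMeasure, lt_iSup_iff] at hCltself
    obtain ⟨K, hK⟩ := hCltself
    rw [lt_iSup_iff] at hK
    obtain ⟨hKA, hK⟩ := hK
    rw [lt_iSup_iff] at hK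
    obtain ⟨hKm, hKlt⟩ := hK
    -- C must meet K
    have hKI : K ⊆ I := hKA.trans hAI
    have hK1 : volume K ≤ 1 := hIvol ▸ measure_mono hKI
    have hCK : (C ∩ K).Nonempty := by
      rw [Set.nonempty_iff_ne_empty]
      intro hemp
      have hCsub : C ⊆ I \ K := fun c hc =>
        ⟨hCI hc, fun hk => (Set.eq_empty_iff_forall_notMem.1 hemp c) ⟨hc, hk⟩⟩
      have h1 : volume C ≤ 1 - volume K := by
        have hdiff : volume (I \ K) = 1 - volume K := by
          rw [measure_diff (μ := volume) hKI hKm.nullMeasurableSet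
            ((hK1.trans_lt ENNReal.one_lt_top).ne), hIvol]
        exact hdiff ▸ measure_mono hCsub
      have h2 : (1:ℝ≥0∞) < volume K + volume C :=
        calc (1:ℝ≥0∞) = (1 - volume C) + volume C := (tsub_add_cancel_of_le hC1).symm
          _ < volume K + volume C :=
            ENNReal.add_lt_add_right (hC1.trans_lt ENNReal.one_lt_top).ne hKlt
      have h3 : volume K + volume C ≤ 1 := by
        calc volume K + volume C ≤ volume K + (1 - volume K) := add_le_add_right h1 _
          _ = 1 := by rw [add_tsub_cancel_of_le hK1]
      exact absurd (h2.trans_le h3) (lt_irrefl _)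
    obtain ⟨x, hxC, hxK⟩ := hCK
    obtain ⟨y, hyDt, hxyQ⟩ := hKA hxK
    obtain ⟨-, hyU⟩ := hyDt
    obtain ⟨_, ⟨q, rfl⟩, ⟨d, hdD, rfl⟩⟩ := hyU
    have : (x, d) ∈ (C ×ˢ D) ∩ ((I ×ˢ I) ∩ {p : ℝ × ℝ | ∃ q : ℚ, (p.1, p.2 + (q:ℝ)) ∈ Q}) :=
      ⟨⟨hxC, hdD⟩, ⟨hCI hxC, hDI hdD⟩, ⟨q, hxyQ⟩⟩
    rw [hdisj] at this
    exact this
end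

section
/- Assume (*). Then there is no closed set Q ⊆ [0,1]², negligible for two-dimensional Lebesgue measure, such that whenever D ⊆ [0,1] has Lebesgue outer measure 1, the set Q^{-1}[D] = { x ∈ [0,1] : there is y ∈ D with (x,y) ∈ Q } has Lebesgue inner measure 1; that is, (*) and (‡) are mutually incompatible. -/
open MeasureTheory
open scoped ENNReal

/-- The statement `(*)` (Talagrand's "Axiom L"): `[0,1]` is not the union of fewer than `𝔠`
closed Lebesgue negligible sets. -/
def StarProp : Prop :=
  ∀ 𝒞 : Set (Set ℝ), Cardinal.mk 𝒞 < Cardinal.continuum →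
    (∀ C ∈ 𝒞, IsClosed C ∧ volume C = 0) → ¬ Set.Icc (0 : ℝ) 1 ⊆ ⋃₀ 𝒞

/-- The statement `(‡)`: there is a closed set `Q ⊆ [0,1]²`, negligible for two-dimensional
Lebesgue measure, such that whenever `D ⊆ [0,1]` has Lebesgue outer measure `1` then
`Q⁻¹[D] = { x : ∃ y ∈ D, (x,y) ∈ Q }` has Lebesgue inner measure `1`. -/
def DoubleDaggerProp : Prop :=
  ∃ Q : Set (ℝ × ℝ),
    Q ⊆ Set.Icc (0 : ℝ) 1 ×ˢ Set.Icc (0 : ℝ) 1 ∧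
    IsClosed Q ∧
    volume Q = 0 ∧
    ∀ D : Set ℝ, D ⊆ Set.Icc (0 : ℝ) 1 → volume D = 1 →
      innerMeasure {x : ℝ | ∃ y ∈ D, (x, y) ∈ Q} = 1

open Set
open scoped NNReal Classical

namespace Stmt19

/-- the (non-normalized) cdf of the restriction of Lebesgue measure to `F` -/
noncomputable def cdf (F : Set ℝ) (t : ℝ) : ℝ := (volume (F ∩ Set.Iic t)).toReal

lemma cdf_inter_fin {F : Set ℝ} (hfin : volume F ≠ ⊤) (t : ℝ) :
    volume (F ∩ Set.Iic t) ≠ ⊤ :=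
  fun h => hfin (top_le_iff.mp (h ▸ measure_mono inter_subset_left))

lemma cdf_diff {F : Set ℝ} (hFm : MeasurableSet F) (hfin : volume F ≠ ⊤) {u v : ℝ}
    (h : u ≤ v) : cdf F v - cdf F u = (volume (F ∩ Set.Ioc u v)).toReal := by
  have hsplit : F ∩ Set.Iic v = (F ∩ Set.Iic u) ∪ (F ∩ Set.Ioc u v) := by
    rw [← Set.inter_union_distrib_left, Set.Iic_union_Ioc_eq_Iic h]
  have hdisj : Disjoint (F ∩ Set.Iic u) (F ∩ Set.Ioc u v) := by
    refine Disjoint.mono inter_subset_right inter_subset_right ?_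
    exact Set.Iic_disjoint_Ioc le_rfl
  have hm2 : MeasurableSet (F ∩ Set.Ioc u v) := hFm.inter measurableSet_Ioc
  have hUnion := measure_union (μ := volume) hdisj hm2
  rw [cdf, cdf, hsplit, hUnion,
    ENNReal.toReal_add (cdf_inter_fin hfin u)
      (fun htop => hfin (top_le_iff.mp (htop ▸ measure_mono inter_subset_left)))]
  ring

lemma cdf_nonneg_diff {F : Set ℝ} (hFm : MeasurableSet F) (hfin : volume F ≠ ⊤) {u v : ℝ}
    (h : u ≤ v) : cdf F v - cdf F u ≤ v - u := by
  rw [cdf_diff hFm hfin h]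
  have h1 : volume (F ∩ Set.Ioc u v) ≤ ENNReal.ofReal (v - u) := by
    refine le_trans (measure_mono inter_subset_right) ?_
    rw [Real.volume_Ioc]
  calc (volume (F ∩ Set.Ioc u v)).toReal ≤ (ENNReal.ofReal (v - u)).toReal :=
        ENNReal.toReal_mono ENNReal.ofReal_ne_top h1
    _ = v - u := ENNReal.toReal_ofReal (by linarith)

lemma cdf_lip {F : Set ℝ} (hFm : MeasurableSet F) (hfin : volume F ≠ ⊤) :
    LipschitzWith 1 (cdf F) := by
  refine LipschitzWith.of_dist_le_mul fun a b => ?_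
  rcases le_total a b with h | h
  · rw [Real.dist_eq, Real.dist_eq, NNReal.coe_one, one_mul,
      abs_sub_comm, abs_sub_comm a b, abs_of_nonneg, abs_of_nonneg (by linarith)]
    · exact cdf_nonneg_diff hFm hfin h
    · rw [cdf_diff hFm hfin h]; positivity
  · rw [Real.dist_eq, Real.dist_eq, NNReal.coe_one, one_mul,
      abs_of_nonneg, abs_of_nonneg (by linarith)]
    · exact cdf_nonneg_diff hFm hfin h
    · rw [cdf_diff hFm hfin h]; positivity

lemma cdf_surj {F : Set ℝ} (hFc : IsCompact F) (hF0 : volume F ≠ 0) {s : ℝ}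
    (h0 : 0 ≤ s) (h1 : s ≤ (volume F).toReal) : ∃ t ∈ F, cdf F t = s := by
  have hFm : MeasurableSet F := hFc.isClosed.measurableSet
  have hfin : volume F ≠ ⊤ := hFc.measure_lt_top.ne
  have hne : F.Nonempty := by
    rcases F.eq_empty_or_nonempty with rfl | h
    · simp at hF0
    · exact h
  rcases h0.eq_or_lt with heq | hpos
  · refine ⟨sInf F, hFc.sInf_mem hne, ?_⟩
    have hsub : F ∩ Set.Iic (sInf F) ⊆ {sInf F} := fun x hx =>
      le_antisymm hx.2 (csInf_le hFc.bddBelow hx.1)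
    have h0' : volume (F ∩ Set.Iic (sInf F)) = 0 :=
      measure_mono_null hsub (measure_singleton _)
    simp [cdf, h0', ← heq]
  · set A := {u : ℝ | s ≤ cdf F u} with hA
    obtain ⟨b, hb⟩ := hFc.bddAbove
    have hbA : b ∈ A := by
      have hFb : F ∩ Set.Iic b = F :=
        inter_eq_self_of_subset_left (fun x hx => hb hx)
      show s ≤ cdf F b
      rw [cdf, hFb]; exact h1
    have hAne : A.Nonempty := ⟨b, hbA⟩
    have hbdd : BddBelow A := by
      refine ⟨sInf F, fun u hu => ?_⟩
      by_contra hlt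
      push_neg at hlt
      have hempty : F ∩ Set.Iic u = ∅ := by
        refine eq_empty_iff_forall_notMem.mpr fun x hx => ?_
        exact absurd (le_trans (csInf_le hFc.bddBelow hx.1) hx.2) (not_le.mpr hlt)
      have : cdf F u = 0 := by rw [cdf, hempty]; simp
      rw [hA] at hu
      simp only [Set.mem_setOf_eq, this] at hu
      linarith
    have hcont : Continuous (cdf F) := (cdf_lip hFm hfin).continuous
    have hAc : IsClosed A := isClosed_le continuous_const hcont
    set t := sInf A with ht
    have htA : t ∈ A := hAc.csInf_mem hAne hbdd
    have hts : cdf F t = s := by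
      refine le_antisymm ?_ htA
      by_contra hlt
      push_neg at hlt
      obtain ⟨δ, hδ, hball⟩ := Metric.continuousAt_iff.mp hcont.continuousAt (cdf F t - s)
        (by linarith)
      have hd : dist (t - δ/2) t < δ := by
        rw [Real.dist_eq]; rw [abs_of_nonpos (by linarith)]; linarith
      have := hball hd
      rw [Real.dist_eq, abs_lt] at this
      have : t - δ/2 ∈ A := by show s ≤ cdf F (t - δ/2); linarith [this.1]
      have := csInf_le hbdd this
      linarith
    have htF : t ∈ F := by
      by_contra htF
      obtain ⟨ε, hε, hball⟩ := Metric.isOpen_iff.mp hFc.isClosed.isOpen_compl t htF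
      have hsub : F ∩ Set.Ioc (t - ε/2) t = ∅ := by
        refine eq_empty_iff_forall_notMem.mpr fun z hz => ?_
        refine hball ?_ hz.1
        rw [Metric.mem_ball, Real.dist_eq, abs_lt]
        constructor <;> [linarith [hz.2.1]; linarith [hz.2.2]]
      have hzero : cdf F t - cdf F (t - ε/2) = 0 := by
        rw [cdf_diff hFm hfin (by linarith), hsub]; simp
      have : t - ε/2 ∈ A := by show s ≤ cdf F (t - ε/2); linarith [htA]
      have := csInf_le hbdd this
      linarith
    exact ⟨t, htF, hts⟩


/-- A Lipschitz image of a Lebesgue-null subset of `ℝ` is null. -/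
lemma lipschitz_image_null {f : ℝ → ℝ} {K : ℝ≥0} (hf : LipschitzWith K f) {s : Set ℝ}
    (hs : volume s = 0) : volume (f '' s) = 0 := by
  have h' := hf.hausdorffMeasure_image_le (d := 1) (by norm_num) s
  rw [hausdorffMeasure_real] at h'
  refine le_antisymm ?_ zero_le
  calc volume (f '' s) ≤ (K : ℝ≥0∞) ^ (1:ℝ) * volume s := h'
    _ = 0 := by rw [hs, mul_zero]

/-- Main covering principle derived from `(*)`: a compact set of positive Lebesgue measure is
not covered by fewer than continuum many closed negligible sets. -/
lemma lemA (hstar : StarProp) {F : Set ℝ} (hFc : IsCompact F) (hF0 : volume F ≠ 0)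
    {𝒞 : Set (Set ℝ)} (hcard : Cardinal.mk 𝒞 < Cardinal.continuum)
    (hC : ∀ C ∈ 𝒞, IsClosed C ∧ volume C = 0) : ∃ x ∈ F, x ∉ ⋃₀ 𝒞 := by
  by_contra hcon
  push_neg at hcon
  have hFm : MeasurableSet F := hFc.isClosed.measurableSet
  have hfin : volume F ≠ ⊤ := hFc.measure_lt_top.ne
  set r := (volume F).toReal with hr
  have hrpos : 0 < r := ENNReal.toReal_pos hF0 hfin
  set f : ℝ → ℝ := fun t => cdf F t / r with hf
  have hlip : LipschitzWith (⟨r⁻¹, by positivity⟩ : ℝ≥0) f := by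
    refine LipschitzWith.of_dist_le_mul fun a b => ?_
    have h1 := (cdf_lip hFm hfin).dist_le_mul a b
    rw [NNReal.coe_one, one_mul] at h1
    simp only [hf, Real.dist_eq, NNReal.coe_mk]
    rw [div_sub_div_same, abs_div, abs_of_pos hrpos, div_eq_inv_mul]
    have := Real.dist_eq a b ▸ h1
    calc r⁻¹ * |cdf F a - cdf F b| ≤ r⁻¹ * |a - b| := by
          apply mul_le_mul_of_nonneg_left _ (by positivity)
          rw [← Real.dist_eq, ← Real.dist_eq]; exact h1
      _ = r⁻¹ * |a - b| := rfl
  set 𝒞' : Set (Set ℝ) := (fun C => f '' (C ∩ F)) '' 𝒞 with h𝒞'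
  refine hstar 𝒞' (lt_of_le_of_lt Cardinal.mk_image_le hcard) ?_ ?_
  · rintro C' ⟨C, hCmem, rfl⟩
    obtain ⟨hCc, hC0⟩ := hC C hCmem
    refine ⟨((hFc.inter_left hCc).image hlip.continuous).isClosed, ?_⟩
    exact lipschitz_image_null hlip (measure_mono_null inter_subset_left hC0)
  · intro s hs
    obtain ⟨t, htF, hts⟩ := cdf_surj hFc hF0 (s := s * r)
      (mul_nonneg hs.1 hrpos.le)
      (by rw [← hr]; nlinarith [hs.2])
    obtain ⟨C, hCm, htC⟩ := hcon t htF
    refine ⟨f '' (C ∩ F), ⟨C, hCm, rfl⟩, t, ⟨htC, htF⟩, ?_⟩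
    show cdf F t / r = s
    rw [hts]; field_simp

lemma exists_compact_pos {A : Set ℝ} (hA : MeasurableSet A) (hfin : volume A ≠ ⊤)
    (h0 : volume A ≠ 0) : ∃ K, K ⊆ A ∧ IsCompact K ∧ volume K ≠ 0 := by
  obtain ⟨K, h1, h2, h3⟩ := hA.exists_isCompact_lt_add hfin h0
  refine ⟨K, h1, h2, fun h => ?_⟩
  rw [h, zero_add] at h3
  exact lt_irrefl _ h3

/-- The Fubini step: almost every vertical and horizontal section of a null set is null. -/
lemma sections_null {Q : Set (ℝ × ℝ)} (hQm : MeasurableSet Q) (hQ0 : volume Q = 0) :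
    ∃ M N : Set ℝ, MeasurableSet M ∧ volume M = 0 ∧ MeasurableSet N ∧ volume N = 0 ∧
      (∀ x ∉ M, volume {y : ℝ | (x, y) ∈ Q} = 0) ∧
      (∀ y ∉ N, volume {x : ℝ | (x, y) ∈ Q} = 0) := by
  have hprod : (volume : Measure (ℝ × ℝ)) = (volume : Measure ℝ).prod volume :=
    MeasureTheory.Measure.volume_eq_prod ℝ ℝ
  have hcol : ∀ᵐ x : ℝ, volume (Prod.mk x ⁻¹' Q) = 0 := by
    have h := (Measure.measure_prod_null (μ := (volume : Measure ℝ)) (ν := volume) hQm).mp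
      (by rw [← hprod]; exact hQ0)
    filter_upwards [h] with x hx using hx
  have hQs : MeasurableSet (Prod.swap ⁻¹' Q : Set (ℝ × ℝ)) := hQm.preimage measurable_swap
  have hswap0 : (volume : Measure ℝ).prod volume (Prod.swap ⁻¹' Q) = 0 := by
    have h := (Measure.measurePreserving_swap (μ := (volume : Measure ℝ)) (ν := volume)).measure_preimage
      hQm.nullMeasurableSet
    rw [h, ← hprod]
    exact hQ0
  have hrow : ∀ᵐ y : ℝ, volume (Prod.mk y ⁻¹' (Prod.swap ⁻¹' Q)) = 0 := by
    have h := (Measure.measure_prod_null (μ := (volume : Measure ℝ)) (ν := volume) hQs).mp hswap0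
    filter_upwards [h] with y hy using hy
  set M0 := {x : ℝ | volume {y : ℝ | (x, y) ∈ Q} ≠ 0} with hM0
  set N0 := {y : ℝ | volume {x : ℝ | (x, y) ∈ Q} ≠ 0} with hN0
  have hM0null : volume M0 = 0 := by
    rw [ae_iff] at hcol
    convert hcol using 2
    rfl
  have hN0null : volume N0 = 0 := by
    rw [ae_iff] at hrow
    convert hrow using 2
    rfl
  refine ⟨toMeasurable volume M0, toMeasurable volume N0,
    measurableSet_toMeasurable _ _, by rw [measure_toMeasurable]; exact hM0null,
    measurableSet_toMeasurable _ _, by rw [measure_toMeasurable]; exact hN0null, ?_, ?_⟩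
  · intro x hx
    by_contra h
    exact hx (subset_toMeasurable volume M0 h)
  · intro y hy
    by_contra h
    exact hy (subset_toMeasurable volume N0 h)


/-- The family of compact positive-measure subsets of `[0,1]`. -/
def Kfam : Set (Set ℝ) := {F | IsCompact F ∧ F ⊆ Set.Icc (0:ℝ) 1 ∧ volume F ≠ 0}

lemma Icc_mem_Kfam : Set.Icc (0:ℝ) 1 ∈ Kfam :=
  ⟨isCompact_Icc, subset_rfl, by simp [Real.volume_Icc]⟩

lemma closed_subset_of_rat {F G : Set ℝ} (hG : IsClosed G)
    (h : ∀ p : ℚ × ℚ, Set.Ioo (p.1 : ℝ) (p.2 : ℝ) ∩ G = ∅ →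
      Set.Ioo (p.1 : ℝ) (p.2 : ℝ) ∩ F = ∅) : F ⊆ G := by
  intro x hxF
  by_contra hxG
  obtain ⟨ε, hε, hball⟩ := Metric.isOpen_iff.mp hG.isOpen_compl x hxG
  obtain ⟨a, ha1, ha2⟩ := exists_rat_btwn (show x - ε < x by linarith)
  obtain ⟨b, hb1, hb2⟩ := exists_rat_btwn (show x < x + ε by linarith)
  have hGe : Set.Ioo (a : ℝ) (b : ℝ) ∩ G = ∅ := by
    refine eq_empty_iff_forall_notMem.mpr fun z hz => ?_
    refine hball ?_ hz.2
    rw [Metric.mem_ball, Real.dist_eq, abs_lt]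
    constructor <;> [linarith [hz.1.1]; linarith [hz.1.2]]
  have hx : x ∈ Set.Ioo (a : ℝ) (b : ℝ) ∩ F := ⟨⟨ha2, hb1⟩, hxF⟩
  rw [h (a, b) hGe] at hx
  exact hx

lemma mk_Kfam_le : Cardinal.mk Kfam ≤ Cardinal.continuum := by
  have hinj : Function.Injective
      (fun F : Kfam => {p : ℚ × ℚ | Set.Ioo (p.1 : ℝ) (p.2 : ℝ) ∩ (F : Set ℝ) = ∅}) := by
    rintro ⟨F, hF⟩ ⟨G, hG⟩ h
    simp only [Subtype.mk.injEq]
    have h' : {p : ℚ × ℚ | Set.Ioo (p.1 : ℝ) (p.2 : ℝ) ∩ F = ∅} =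
        {p : ℚ × ℚ | Set.Ioo (p.1 : ℝ) (p.2 : ℝ) ∩ G = ∅} := congrArg _ h
    refine le_antisymm ?_ ?_
    · exact closed_subset_of_rat hG.1.isClosed fun p hp => by
        have : p ∈ {p : ℚ × ℚ | Set.Ioo (p.1 : ℝ) (p.2 : ℝ) ∩ G = ∅} := hp
        rw [← h'] at this
        exact this
    · exact closed_subset_of_rat hF.1.isClosed fun p hp => by
        have : p ∈ {p : ℚ × ℚ | Set.Ioo (p.1 : ℝ) (p.2 : ℝ) ∩ F = ∅} := hp
        rw [h'] at this
        exact this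
  calc Cardinal.mk Kfam ≤ Cardinal.mk (Set (ℚ × ℚ)) := Cardinal.mk_le_of_injective hinj
    _ = 2 ^ Cardinal.aleph0 := by rw [Cardinal.mk_set, Cardinal.mk_denumerable]
    _ = Cardinal.continuum := Cardinal.two_power_aleph0

/-- index well-order of size continuum -/
abbrev W : Type := (Cardinal.continuum.ord).ToType

lemma mk_W : Cardinal.mk W = Cardinal.continuum := by
  rw [Cardinal.mk_toType, Cardinal.card_ord]

lemma mk_Iio_W (w : W) : Cardinal.mk (Set.Iio w) < Cardinal.continuum :=
  Cardinal.mk_Iio_ord_toType w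

/-- the property defining the transfinite recursion -/
def Good (Q : Set (ℝ × ℝ)) (M N : Set ℝ) (e : W → Set ℝ)
    (w : W) (prev : ∀ v : W, v < w → ℝ × ℝ) (p : ℝ × ℝ) : Prop :=
  p.1 ∈ e w ∧ p.1 ∉ M ∧ (∀ v (hv : v < w), (p.1, (prev v hv).2) ∉ Q) ∧
  p.2 ∈ e w ∧ p.2 ∉ N ∧ (∀ v (hv : v < w), ((prev v hv).1, p.2) ∉ Q) ∧ p ∉ Q

noncomputable def pick (Q : Set (ℝ × ℝ)) (M N : Set ℝ) (e : W → Set ℝ) : W → ℝ × ℝ :=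
  (wellFounded_lt (α := W)).fix fun w prev =>
    if h : ∃ p, Good Q M N e w prev p then h.choose else (0, 0)

lemma pick_eq (Q : Set (ℝ × ℝ)) (M N : Set ℝ) (e : W → Set ℝ) (w : W) :
    pick Q M N e w =
      if h : ∃ p, Good Q M N e w (fun v _ => pick Q M N e v) p then h.choose else (0, 0) :=
  (wellFounded_lt (α := W)).fix_eq _ w

lemma pick_good (hstar : StarProp) {Q : Set (ℝ × ℝ)} {M N : Set ℝ} {e : W → Set ℝ}
    (hQc : IsClosed Q)
    (hMm : MeasurableSet M) (hM0 : volume M = 0)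
    (hMcol : ∀ x ∉ M, volume {y : ℝ | (x, y) ∈ Q} = 0)
    (hNm : MeasurableSet N) (hN0 : volume N = 0)
    (hNrow : ∀ y ∉ N, volume {x : ℝ | (x, y) ∈ Q} = 0)
    (heK : ∀ w, e w ∈ Kfam) :
    ∀ w : W, Good Q M N e w (fun v _ => pick Q M N e v) (pick Q M N e w) := by
  intro w
  induction w using (wellFounded_lt (α := W)).induction with
  | _ w ih => ?_
  have hex : ∃ p, Good Q M N e w (fun v _ => pick Q M N e v) p := by
    obtain ⟨hFc, hFi, hF0⟩ := heK w
    have hFfin : volume (e w) ≠ ⊤ := hFc.measure_lt_top.ne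
    -- choose x
    have hAm : MeasurableSet (e w \ M) := hFc.isClosed.measurableSet.diff hMm
    have hA0 : volume (e w \ M) ≠ 0 := by rw [measure_diff_null hM0]; exact hF0
    have hAfin : volume (e w \ M) ≠ ⊤ :=
      fun h => hFfin (top_le_iff.mp (h ▸ measure_mono diff_subset))
    obtain ⟨K, hKA, hKc, hK0⟩ := exists_compact_pos hAm hAfin hA0
    set 𝒞₁ : Set (Set ℝ) :=
      Set.range (fun v : Set.Iio w => {x : ℝ | (x, (pick Q M N e v.1).2) ∈ Q}) with h𝒞₁
    have hcard₁ : Cardinal.mk 𝒞₁ < Cardinal.continuum :=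
      lt_of_le_of_lt Cardinal.mk_range_le (mk_Iio_W w)
    have hC₁ : ∀ C ∈ 𝒞₁, IsClosed C ∧ volume C = 0 := by
      rintro C ⟨v, rfl⟩
      refine ⟨hQc.preimage (continuous_id.prodMk continuous_const), ?_⟩
      exact hNrow _ ((ih v.1 v.2).2.2.2.2.1)
    obtain ⟨x, hxK, hxC⟩ := lemA hstar hKc hK0 hcard₁ hC₁
    have hxF : x ∈ e w := (hKA hxK).1
    have hxM : x ∉ M := (hKA hxK).2
    have hxQ : ∀ v (hv : v < w), (x, (pick Q M N e v).2) ∉ Q := fun v hv hmem =>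
      hxC ⟨_, ⟨⟨v, hv⟩, rfl⟩, hmem⟩
    -- choose y
    have hBm : MeasurableSet (e w \ N) := hFc.isClosed.measurableSet.diff hNm
    have hB0 : volume (e w \ N) ≠ 0 := by rw [measure_diff_null hN0]; exact hF0
    have hBfin : volume (e w \ N) ≠ ⊤ :=
      fun h => hFfin (top_le_iff.mp (h ▸ measure_mono diff_subset))
    obtain ⟨K', hKB, hKc', hK0'⟩ := exists_compact_pos hBm hBfin hB0
    set 𝒞₂ : Set (Set ℝ) := insert {y : ℝ | (x, y) ∈ Q}
      (Set.range (fun v : Set.Iio w => {y : ℝ | ((pick Q M N e v.1).1, y) ∈ Q})) with h𝒞₂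
    have hcard₂ : Cardinal.mk 𝒞₂ < Cardinal.continuum := by
      refine lt_of_le_of_lt Cardinal.mk_insert_le ?_
      exact Cardinal.add_lt_of_lt Cardinal.aleph0_le_continuum
        (lt_of_le_of_lt Cardinal.mk_range_le (mk_Iio_W w))
        (lt_of_lt_of_le Cardinal.one_lt_aleph0 Cardinal.aleph0_le_continuum)
    have hC₂ : ∀ C ∈ 𝒞₂, IsClosed C ∧ volume C = 0 := by
      rintro C (rfl | ⟨v, rfl⟩)
      · exact ⟨hQc.preimage (continuous_const.prodMk continuous_id), hMcol x hxM⟩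
      · exact ⟨hQc.preimage (continuous_const.prodMk continuous_id),
          hMcol _ ((ih v.1 v.2).2.1)⟩
    obtain ⟨y, hyK, hyC⟩ := lemA hstar hKc' hK0' hcard₂ hC₂
    have hyF : y ∈ e w := (hKB hyK).1
    have hyN : y ∉ N := (hKB hyK).2
    have hyQ : ∀ v (hv : v < w), ((pick Q M N e v).1, y) ∉ Q := fun v hv hmem =>
      hyC ⟨_, Set.mem_insert_of_mem _ ⟨⟨v, hv⟩, rfl⟩, hmem⟩
    have hxyQ : (x, y) ∉ Q := fun hmem =>
      hyC ⟨{y : ℝ | (x, y) ∈ Q}, Set.mem_insert _ _, hmem⟩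
    exact ⟨(x, y), hxF, hxM, hxQ, hyF, hyN, hyQ, hxyQ⟩
  rw [pick_eq, dif_pos hex]
  exact hex.choose_spec

end Stmt19

open Stmt19 in
/-- **2G.**  `(*)` and `(‡)` are mutually incompatible: assuming `(*)`, there is no closed
negligible `Q ⊆ [0,1]²` carrying every set of full outer measure onto a set of full inner
measure. -/
theorem stmt_19 (hstar : StarProp) : ¬ DoubleDaggerProp := by
  rintro ⟨Q, hQi, hQc, hQ0, hQprop⟩
  obtain ⟨M, N, hMm, hM0, hNm, hN0, hMcol, hNrow⟩ :=
    sections_null hQc.measurableSet hQ0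
  -- an enumeration of `Kfam` indexed by `W`
  haveI : Nonempty Kfam := ⟨⟨_, Icc_mem_Kfam⟩⟩
  have hle : Cardinal.mk Kfam ≤ Cardinal.mk W := by rw [mk_W]; exact mk_Kfam_le
  obtain ⟨ι⟩ := Cardinal.le_def _ _ |>.mp hle
  let e : W → Set ℝ := fun w => ((Function.invFun ι w : Kfam) : Set ℝ)
  have heK : ∀ w, e w ∈ Kfam := fun w => (Function.invFun ι w).2
  have hesurj : ∀ F ∈ Kfam, ∃ w, e w = F := by
    intro F hF
    obtain ⟨w, hw⟩ := Function.invFun_surjective ι.injective ⟨F, hF⟩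
    exact ⟨w, by simp only [e, hw]⟩
  have hgood := pick_good hstar hQc hMm hM0 hMcol hNm hN0 hNrow heK
  set p : W → ℝ × ℝ := pick Q M N e with hp
  have key : ∀ v u : W, ((p v).1, (p u).2) ∉ Q := by
    intro v u
    rcases lt_trichotomy u v with h | h | h
    · exact (hgood v).2.2.1 u h
    · subst h
      have h7 := (hgood u).2.2.2.2.2.2
      intro hmem
      exact h7 (by rwa [Prod.mk.eta] at hmem)
    · exact (hgood u).2.2.2.2.2.1 v h
  set D : Set ℝ := Set.range (fun w => (p w).2) with hD
  have hDi : D ⊆ Set.Icc (0:ℝ) 1 := by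
    rintro _ ⟨w, rfl⟩
    exact (heK w).2.1 (hgood w).2.2.2.1
  have hD1 : volume D = 1 := by
    have hle1 : volume D ≤ 1 := by
      have h := measure_mono (μ := (volume : Measure ℝ)) hDi
      rwa [Real.volume_Icc, show ENNReal.ofReal (1 - 0) = 1 by norm_num] at h
    rcases hle1.lt_or_eq with hlt | heq
    · exfalso
      set G := toMeasurable volume D with hG
      have hGm : MeasurableSet G := measurableSet_toMeasurable volume D
      have hGv : volume G = volume D := measure_toMeasurable D
      have hHm : MeasurableSet (Set.Icc (0:ℝ) 1 \ G) := measurableSet_Icc.diff hGm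
      have hH0 : volume (Set.Icc (0:ℝ) 1 \ G) ≠ 0 := by
        intro h0
        have hsub : Set.Icc (0:ℝ) 1 ⊆ (Set.Icc (0:ℝ) 1 \ G) ∪ G := subset_diff_union _ _
        have := (measure_mono (μ := (volume : Measure ℝ)) hsub).trans (measure_union_le _ _)
        rw [h0, zero_add, hGv, Real.volume_Icc,
          show ENNReal.ofReal (1 - 0) = 1 by norm_num] at this
        exact absurd (lt_of_le_of_lt this hlt) (lt_irrefl _)
      have hHfin : volume (Set.Icc (0:ℝ) 1 \ G) ≠ ⊤ := by
        intro h
        have := measure_mono (μ := (volume : Measure ℝ)) (diff_subset (s := Set.Icc (0:ℝ) 1) (t := G))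
        rw [h, Real.volume_Icc] at this
        simp at this
      obtain ⟨L, hLH, hLc, hL0⟩ := exists_compact_pos hHm hHfin hH0
      have hLK : L ∈ Kfam := ⟨hLc, fun x hx => (hLH hx).1, hL0⟩
      obtain ⟨w, hw⟩ := hesurj L hLK
      have hy : (p w).2 ∈ L := by rw [← hw]; exact (hgood w).2.2.2.1
      exact (hLH hy).2 (subset_toMeasurable volume D ⟨w, rfl⟩)
    · exact heq
  have h1 := hQprop D hDi hD1
  set S := {x : ℝ | ∃ y ∈ D, (x, y) ∈ Q} with hS
  have hKex : ∃ K, K ⊆ S ∧ MeasurableSet K ∧ volume K ≠ 0 := by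
    by_contra hno
    push_neg at hno
    have hzero : innerMeasure S = 0 := by
      rw [innerMeasure]
      refine le_antisymm ?_ zero_le
      refine iSup_le fun K => iSup_le fun hsub => iSup_le fun hmeas => ?_
      rw [hno K hsub hmeas]
    rw [hzero] at h1
    exact zero_ne_one h1
  obtain ⟨K, hKS, hKm, hK0⟩ := hKex
  have hSsub : S ⊆ Set.Icc (0:ℝ) 1 := by
    rintro x ⟨y, _, hxy⟩
    exact (hQi hxy).1
  have hKfin : volume K ≠ ⊤ := by
    intro h
    have := measure_mono (μ := (volume : Measure ℝ)) (hKS.trans hSsub)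
    rw [h, Real.volume_Icc] at this
    simp at this
  obtain ⟨L, hLK, hLc, hL0⟩ := exists_compact_pos hKm hKfin hK0
  have hLKfam : L ∈ Kfam := ⟨hLc, (hLK.trans hKS).trans hSsub, hL0⟩
  obtain ⟨w, hw⟩ := hesurj L hLKfam
  have hx : (p w).1 ∈ S := hKS (hLK (by rw [← hw] at *; exact hw ▸ (hgood w).1))
  obtain ⟨y, ⟨u, rfl⟩, hxy⟩ := hx
  exact key w u hxy
end
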